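/- arXiv:2401.15549 — 2 statements merged into one kernel-verified Lean document; each statement's English description precedes it below -/
import Mathlib

section
/- Let G be a connected nontrivial simple graph with m vertices and let n ≥ 2. If min{(3n−2)·λ(G), m + 2·e(G)} ≥ min{2·ξ(G) + 4, 5·δ(G) + 1}, then the strong product G ⊠ P_n is maximally restricted edge-connected, i.e., λ′(G ⊠ P_n) = ξ(G ⊠ P_n). -/
/-- The strong product of two simple graphs. -/
def strongProd {α β : Type*} (G : SimpleGraph α) (H : SimpleGraph β) :
    SimpleGraph (α × β) where
  Adj x y := (x.1 = y.1 ∧ H.Adj x.2 y.2) ∨ (x.2 = y.2 ∧ G.Adj x.1 y.1) ∨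
    (G.Adj x.1 y.1 ∧ H.Adj x.2 y.2)
  symm := by
    constructor
    rintro ⟨a₁, a₂⟩ ⟨b₁, b₂⟩ (⟨h1, h2⟩ | ⟨h1, h2⟩ | ⟨h1, h2⟩)
    · exact Or.inl ⟨h1.symm, h2.symm⟩
    · exact Or.inr (Or.inl ⟨h1.symm, h2.symm⟩)
    · exact Or.inr (Or.inr ⟨h1.symm, h2.symm⟩)
  loopless := by
    constructor
    rintro ⟨a₁, a₂⟩ (⟨_, h⟩ | ⟨_, h⟩ | ⟨h, _⟩)
    · exact H.irrefl h
    · exact G.irrefl h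
    · exact G.irrefl h

/-- The degree of a vertex. -/
noncomputable def deg {α : Type*} (G : SimpleGraph α) (v : α) : ℕ := (G.neighborSet v).ncard

/-- The minimum degree `δ(G)`. -/
noncomputable def minDeg {α : Type*} (G : SimpleGraph α) : ℕ := sInf {d | ∃ v, d = deg G v}

/-- The number of edges `e(G)`. -/
noncomputable def numEdges {α : Type*} (G : SimpleGraph α) : ℕ := G.edgeSet.ncard

/-- The minimum edge-degree `ξ(G) = min {d(u) + d(v) - 2 : uv ∈ E(G)}`. -/
noncomputable def minEdgeDeg {α : Type*} (G : SimpleGraph α) : ℕ :=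
  sInf {d | ∃ u v, G.Adj u v ∧ d = deg G u + deg G v - 2}

/-- The edge-connectivity `λ(G)`. -/
noncomputable def edgeConn {α : Type*} (G : SimpleGraph α) : ℕ :=
  sInf {k | ∃ S : Set (Sym2 α), S ⊆ G.edgeSet ∧ S.ncard = k ∧
    ¬ (G.deleteEdges S).Connected}

/-- `S` is a restricted edge-cut of `G`: deleting `S` disconnects `G` and every
component of `G - S` has at least two vertices. -/
def IsRestrictedEdgeCut {α : Type*} (G : SimpleGraph α) (S : Set (Sym2 α)) : Prop :=
  S ⊆ G.edgeSet ∧ ¬ (G.deleteEdges S).Connected ∧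
    ∀ v : α, 2 ≤ ((G.deleteEdges S).connectedComponentMk v).supp.ncard

/-- The restricted edge-connectivity `λ'(G)`. -/
noncomputable def restEdgeConn {α : Type*} (G : SimpleGraph α) : ℕ :=
  sInf {k | ∃ S : Set (Sym2 α), IsRestrictedEdgeCut G S ∧ S.ncard = k}

/-- `G` is super restricted edge-connected: every minimum restricted edge-cut
isolates an edge, i.e. some component of `G - S` has exactly two vertices. -/
def SuperRestrictedEdgeConnected {α : Type*} (G : SimpleGraph α) : Prop :=
  ∀ S : Set (Sym2 α), IsRestrictedEdgeCut G S → S.ncard = restEdgeConn G →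
    ∃ v : α, ((G.deleteEdges S).connectedComponentMk v).supp.ncard = 2

/-- The set `[X, Y]_G` of edges of `G` with one end in `X` and the other in `Y`. -/
def edgesBetween {α : Type*} (G : SimpleGraph α) (X Y : Set α) : Set (Sym2 α) :=
  {e | e ∈ G.edgeSet ∧ ∃ u ∈ X, ∃ v ∈ Y, e = s(u, v)}

namespace StrongAux

open SimpleGraph Finset
open scoped Classical

/-! ### Path neighborhood machinery -/

/-- closed path-neighborhood of `j` in `Fin n`. -/
noncomputable def pnb (n : ℕ) (j : Fin n) : Finset (Fin n) :=
  univ.filter (fun j' => j'.val = j.val ∨ j'.val + 1 = j.val ∨ j.val + 1 = j'.val)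

lemma mem_pnb {n : ℕ} {j j' : Fin n} :
    j' ∈ pnb n j ↔ (j'.val = j.val ∨ j'.val + 1 = j.val ∨ j.val + 1 = j'.val) := by
  simp [pnb]

lemma pnb_card {n : ℕ} (j : Fin n) :
    (pnb n j).card = 1 + (if j.val + 1 < n then 1 else 0) + (if 0 < j.val then 1 else 0) := by
  by_cases h1 : j.val + 1 < n
  · by_cases h0 : 0 < j.val
    · have : pnb n j = {⟨j.val - 1, by omega⟩, j, ⟨j.val + 1, h1⟩} := by
        ext j'; simp [mem_pnb, Finset.mem_insert, Fin.ext_iff]; omega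
      rw [this]; rw [Finset.card_insert_of_notMem (by simp only [Finset.mem_insert, Finset.mem_singleton, Fin.ext_iff]; omega),
        Finset.card_insert_of_notMem (by simp only [Finset.mem_insert, Finset.mem_singleton, Fin.ext_iff]; omega)]
      simp [h1, h0]
    · have : pnb n j = {j, ⟨j.val + 1, h1⟩} := by
        ext j'; simp [mem_pnb, Finset.mem_insert, Fin.ext_iff]; omega
      rw [this, Finset.card_insert_of_notMem (by simp only [Finset.mem_insert, Finset.mem_singleton, Fin.ext_iff]; omega)]
      simp [h1, h0]
  · by_cases h0 : 0 < j.val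
    · have : pnb n j = {⟨j.val - 1, by omega⟩, j} := by
        ext j'; simp [mem_pnb, Finset.mem_insert, Fin.ext_iff]; omega
      rw [this, Finset.card_insert_of_notMem (by simp only [Finset.mem_insert, Finset.mem_singleton, Fin.ext_iff]; omega)]
      simp [h1, h0]
    · have : pnb n j = {j} := by
        ext j'; simp [mem_pnb, Finset.mem_insert, Fin.ext_iff]; omega
      rw [this]; simp [h1, h0]

lemma pnb_card_ge {n : ℕ} (hn : 2 ≤ n) (j : Fin n) : 2 ≤ (pnb n j).card := by
  rw [pnb_card]
  have := j.isLt
  by_cases h1 : j.val + 1 < n <;> by_cases h0 : 0 < j.val <;> simp [h1, h0] <;> omega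

lemma card_filter_succ_lt (n : ℕ) :
    ((univ : Finset (Fin n)).filter (fun j => j.val + 1 < n)).card = n - 1 := by
  classical
  rcases Nat.eq_zero_or_pos n with h | h
  · subst h; simp
  have hsplit := Finset.card_filter_add_card_filter_not
    (s := (univ : Finset (Fin n))) (p := fun j => j.val + 1 < n)
  have hneg : ((univ : Finset (Fin n)).filter (fun j => ¬ j.val + 1 < n)) =
      {(⟨n-1, by omega⟩ : Fin n)} := by
    ext j; have := j.isLt
    simp only [Finset.mem_filter, Finset.mem_univ, true_and, Finset.mem_singleton, Fin.ext_iff]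
    omega
  rw [hneg] at hsplit
  simp only [Finset.card_singleton, Finset.card_univ, Fintype.card_fin] at hsplit
  omega

lemma card_filter_pos (n : ℕ) :
    ((univ : Finset (Fin n)).filter (fun j => 0 < j.val)).card = n - 1 := by
  classical
  rcases Nat.eq_zero_or_pos n with h | h
  · subst h; simp
  have hsplit := Finset.card_filter_add_card_filter_not
    (s := (univ : Finset (Fin n))) (p := fun j => 0 < j.val)
  have hneg : ((univ : Finset (Fin n)).filter (fun j => ¬ 0 < j.val)) =
      {(⟨0, by omega⟩ : Fin n)} := by
    ext j; have := j.isLt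
    simp only [Finset.mem_filter, Finset.mem_univ, true_and, Finset.mem_singleton, Fin.ext_iff]
    omega
  rw [hneg] at hsplit
  simp only [Finset.card_singleton, Finset.card_univ, Fintype.card_fin] at hsplit
  omega

lemma sum_pnb (n : ℕ) (hn : 1 ≤ n) : ∑ j : Fin n, (pnb n j).card = 3 * n - 2 := by
  have : ∀ j : Fin n, (pnb n j).card =
      1 + (if j.val + 1 < n then 1 else 0) + (if 0 < j.val then 1 else 0) := pnb_card
  rw [Finset.sum_congr rfl (fun j _ => this j)]
  rw [Finset.sum_add_distrib, Finset.sum_add_distrib]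
  have e1 := (Finset.card_filter (fun j : Fin n => j.val + 1 < n) univ).symm
  have e2 := (Finset.card_filter (fun j : Fin n => 0 < j.val) univ).symm
  rw [e1, e2, card_filter_succ_lt, card_filter_pos, Finset.sum_const]
  simp only [Finset.card_univ, Fintype.card_fin, smul_eq_mul, mul_one]
  omega

/-! ### Strong product with a path -/

variable {V : Type*}

/-- abbreviation for the strong product with a path -/
abbrev HH (G : SimpleGraph V) (n : ℕ) : SimpleGraph (V × Fin n) :=
  strongProd G (SimpleGraph.pathGraph n)

lemma HH_adj {G : SimpleGraph V} {n : ℕ} {a b : V × Fin n} :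
    (HH G n).Adj a b ↔ (a.1 = b.1 ∧ (SimpleGraph.pathGraph n).Adj a.2 b.2) ∨
      (a.2 = b.2 ∧ G.Adj a.1 b.1) ∨ (G.Adj a.1 b.1 ∧ (SimpleGraph.pathGraph n).Adj a.2 b.2) :=
  Iff.rfl

lemma adj_of_close {G : SimpleGraph V} {n : ℕ} {u v : V} {l t : Fin n}
    (huv : G.Adj u v) (h : l.val = t.val ∨ l.val + 1 = t.val ∨ t.val + 1 = l.val) :
    (HH G n).Adj (u, l) (v, t) := by
  rcases h with h | h | h
  · exact Or.inr (Or.inl ⟨Fin.ext h, huv⟩)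
  · exact Or.inr (Or.inr ⟨huv, pathGraph_adj.mpr (Or.inl h)⟩)
  · exact Or.inr (Or.inr ⟨huv, pathGraph_adj.mpr (Or.inr h)⟩)

lemma adj_vert {G : SimpleGraph V} {n : ℕ} {v : V} {l t : Fin n} (h : l.val + 1 = t.val) :
    (HH G n).Adj (v, l) (v, t) :=
  Or.inl ⟨rfl, pathGraph_adj.mpr (Or.inl h)⟩

/-- the set of edges of the strong product crossing between `X` and its complement -/
def cross (G : SimpleGraph V) (n : ℕ) (X : Set (V × Fin n)) : Set (Sym2 (V × Fin n)) :=
  {e | ∃ a b, (HH G n).Adj a b ∧ a ∈ X ∧ b ∉ X ∧ e = s(a, b)}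

lemma mem_cross_of {G : SimpleGraph V} {n : ℕ} {X : Set (V × Fin n)} {a b : V × Fin n}
    (hadj : (HH G n).Adj a b) (ha : a ∈ X) (hb : b ∉ X) : s(a, b) ∈ cross G n X :=
  ⟨a, b, hadj, ha, hb, rfl⟩

lemma mem_cross_of' {G : SimpleGraph V} {n : ℕ} {X : Set (V × Fin n)} {a b : V × Fin n}
    (hadj : (HH G n).Adj a b) (hb : b ∈ X) (ha : a ∉ X) : s(a, b) ∈ cross G n X :=
  ⟨b, a, hadj.symm, hb, ha, Sym2.eq_swap.symm⟩

lemma cross_compl {G : SimpleGraph V} {n : ℕ} (X : Set (V × Fin n)) :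
    cross G n Xᶜ = cross G n X := by
  ext e
  constructor
  · rintro ⟨a, b, hadj, ha, hb, rfl⟩
    exact mem_cross_of' hadj (by simpa using hb) (by simpa using ha)
  · rintro ⟨a, b, hadj, ha, hb, rfl⟩
    exact mem_cross_of' (X := Xᶜ) hadj (by simpa using hb) (by simpa using ha)

lemma cross_subset_edgeSet {G : SimpleGraph V} {n : ℕ} (X : Set (V × Fin n)) :
    cross G n X ⊆ (HH G n).edgeSet := by
  rintro e ⟨a, b, hadj, -, -, rfl⟩
  exact hadj

/-- the fan of potential crossing edges from the fiber of `u` into `{v} × J` -/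
noncomputable def fan (G : SimpleGraph V) (n : ℕ) (u v : V) (J : Finset (Fin n)) :
    Finset (Sym2 (V × Fin n)) :=
  J.biUnion (fun j => (pnb n j).image (fun j' => s((u, j'), (v, j))))

lemma mem_fan {G : SimpleGraph V} {n : ℕ} {u v : V} {J : Finset (Fin n)} {e} :
    e ∈ fan G n u v J ↔ ∃ j ∈ J, ∃ j' ∈ pnb n j, e = s((u, j'), (v, j)) := by
  simp only [fan, Finset.mem_biUnion, Finset.mem_image]
  constructor
  · rintro ⟨j, hj, j', hj', rfl⟩; exact ⟨j, hj, j', hj', rfl⟩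
  · rintro ⟨j, hj, j', hj', rfl⟩; exact ⟨j, hj, j', hj', rfl⟩

lemma fan_key {G : SimpleGraph V} {n : ℕ} {u v : V} {J : Finset (Fin n)} {e}
    (he : e ∈ fan G n u v J) : Sym2.map Prod.fst e = s(u, v) := by
  obtain ⟨j, -, j', -, rfl⟩ := mem_fan.mp he
  rfl

lemma card_fan {G : SimpleGraph V} {n : ℕ} {u v : V} (huv : u ≠ v) (J : Finset (Fin n)) :
    (fan G n u v J).card = ∑ j ∈ J, (pnb n j).card := by
  rw [fan, Finset.card_biUnion]
  · refine Finset.sum_congr rfl (fun j _ => ?_)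
    apply Finset.card_image_of_injective
    intro a b hab
    rcases Sym2.eq_iff.mp hab with ⟨h1, -⟩ | ⟨h1, -⟩
    · exact (Prod.ext_iff.mp h1).2
    · exact absurd (Prod.ext_iff.mp h1).1 huv
  · intro j hj j2 hj2 hne
    rw [Function.onFun, Finset.disjoint_left]
    rintro e he1 he2
    obtain ⟨a, -, rfl⟩ := Finset.mem_image.mp he1
    obtain ⟨b, -, hb⟩ := Finset.mem_image.mp he2
    rcases Sym2.eq_iff.mp hb with ⟨h1, h2⟩ | ⟨h1, h2⟩
    · exact hne ((Prod.ext_iff.mp h2).2.symm)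
    · exact huv (Prod.ext_iff.mp h2).1.symm

lemma fan_subset_cross {G : SimpleGraph V} {n : ℕ} {u v : V} {J : Finset (Fin n)}
    {X : Set (V × Fin n)} (hadj : G.Adj u v) (hu : ∀ j', (u, j') ∈ X)
    (hv : ∀ j ∈ J, (v, j) ∉ X) : (fan G n u v J : Set (Sym2 (V × Fin n))) ⊆ cross G n X := by
  intro e he
  obtain ⟨j, hj, j', hj', rfl⟩ := mem_fan.mp (Finset.mem_coe.mp he)
  exact mem_cross_of (adj_of_close hadj (mem_pnb.mp hj')) (hu j') (hv j hj)

lemma fan_subset_cross' {G : SimpleGraph V} {n : ℕ} {u v : V} {J : Finset (Fin n)}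
    {X : Set (V × Fin n)} (hadj : G.Adj u v) (hu : ∀ j', (u, j') ∉ X)
    (hv : ∀ j ∈ J, (v, j) ∈ X) : (fan G n u v J : Set (Sym2 (V × Fin n))) ⊆ cross G n X := by
  rw [← cross_compl]
  exact fan_subset_cross hadj (fun j' => by simpa using hu j')
    (fun j hj => by simpa using hv j hj)

/-! ### breaks -/

lemma exists_break {n : ℕ} {P : Fin n → Prop} (h1 : ∃ j, P j) (h2 : ∃ j, ¬ P j) :
    ∃ i : ℕ, ∃ hi : i + 1 < n, (P ⟨i, by omega⟩ ↔ ¬ P ⟨i + 1, hi⟩) := by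
  by_contra hc
  push_neg at hc
  have step : ∀ i, ∀ hi : i + 1 < n, (P ⟨i, by omega⟩ ↔ P ⟨i + 1, hi⟩) := by
    intro i hi
    have := hc i hi
    tauto
  have all : ∀ k, ∀ hk : k < n, (P ⟨k, hk⟩ ↔ P ⟨0, by omega⟩) := by
    intro k
    induction k with
    | zero => exact fun hk => Iff.rfl
    | succ k ih => exact fun hk => ((step k hk).symm).trans (ih (by omega))
  obtain ⟨j1, hj1⟩ := h1
  obtain ⟨j2, hj2⟩ := h2
  have e1 := all j1.val j1.isLt
  have e2 := all j2.val j2.isLt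
  rw [Fin.eta] at e1 e2
  tauto

/-! ### walks stay in closed sets -/

lemma walk_closed {α : Type*} {K : SimpleGraph α} {Z : Set α}
    (hcl : ∀ a b, K.Adj a b → a ∈ Z → b ∈ Z) {a b : α} (w : K.Walk a b) :
    a ∈ Z → b ∈ Z := by
  induction w with
  | nil => exact id
  | cons h p ih => exact fun ha => ih (hcl _ _ h ha)

/-! ### fiber side sets -/

def Aset {n : ℕ} (X : Set (V × Fin n)) : Set V := {v | ∀ j, (v, j) ∈ X}

def Cset {n : ℕ} (X : Set (V × Fin n)) : Set V := {v | ∀ j, (v, j) ∉ X}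

def Bset {n : ℕ} (X : Set (V × Fin n)) : Set V := {v | (∃ j, (v, j) ∈ X) ∧ (∃ j, (v, j) ∉ X)}

lemma part_cases {n : ℕ} {X : Set (V × Fin n)} (v : V) :
    v ∈ Aset X ∨ v ∈ Bset X ∨ v ∈ Cset X := by
  by_cases h1 : ∃ j, (v, j) ∈ X <;> by_cases h2 : ∃ j, (v, j) ∉ X
  · exact Or.inr (Or.inl ⟨h1, h2⟩)
  · push_neg at h2; exact Or.inl h2
  · push_neg at h1; exact Or.inr (Or.inr h1)
  · push_neg at h1; exact Or.inr (Or.inr h1)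

lemma Aset_compl {n : ℕ} (X : Set (V × Fin n)) : Aset Xᶜ = Cset X := by
  ext v; simp [Aset, Cset]

lemma Cset_compl {n : ℕ} (X : Set (V × Fin n)) : Cset Xᶜ = Aset X := by
  ext v; simp [Aset, Cset]

lemma Bset_compl {n : ℕ} (X : Set (V × Fin n)) : Bset Xᶜ = Bset X := by
  ext v; simp [Bset]; tauto

lemma Aset_Cset_disj {n : ℕ} (hn : 0 < n) {X : Set (V × Fin n)} {v : V}
    (hA : v ∈ Aset X) (hC : v ∈ Cset X) : False :=
  hC ⟨0, hn⟩ (hA ⟨0, hn⟩)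

lemma Aset_Bset_disj {n : ℕ} {X : Set (V × Fin n)} {v : V}
    (hA : v ∈ Aset X) (hB : v ∈ Bset X) : False := by
  obtain ⟨-, j, hj⟩ := hB; exact hj (hA j)

lemma Cset_Bset_disj {n : ℕ} {X : Set (V × Fin n)} {v : V}
    (hC : v ∈ Cset X) (hB : v ∈ Bset X) : False := by
  obtain ⟨⟨j, hj⟩, -⟩ := hB; exact hC j hj

/-- a broken fiber yields a vertical crossing edge -/
lemma exists_vert {G : SimpleGraph V} {n : ℕ} {X : Set (V × Fin n)} {v : V}
    (hv : v ∈ Bset X) :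
    ∃ i : ℕ, ∃ hi : i + 1 < n,
      s(((v, ⟨i, by omega⟩) : V × Fin n), (v, ⟨i + 1, hi⟩)) ∈ cross G n X := by
  obtain ⟨i, hi, hbr⟩ := exists_break hv.1 hv.2
  refine ⟨i, hi, ?_⟩
  by_cases hPi : (v, (⟨i, by omega⟩ : Fin n)) ∈ X
  · exact mem_cross_of (adj_vert rfl) hPi (hbr.mp hPi)
  · exact mem_cross_of' (adj_vert rfl) (by tauto) hPi

/-! ### degrees -/

lemma exists_adj {V : Type*} [Fintype V] (G : SimpleGraph V) (hG : G.Connected)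
    (hc : 2 ≤ Fintype.card V) (v : V) : ∃ u, G.Adj v u := by
  obtain ⟨u, hu⟩ := Fintype.exists_ne_of_one_lt_card (by omega) v
  obtain ⟨w⟩ := hG.preconnected v u
  cases w with
  | nil => exact absurd rfl hu
  | cons h p => exact ⟨_, h⟩

lemma one_le_deg {V : Type*} [Fintype V] (G : SimpleGraph V) (hG : G.Connected)
    (hc : 2 ≤ Fintype.card V) (v : V) : 1 ≤ deg G v := by
  obtain ⟨u, hu⟩ := exists_adj G hG hc v
  have : (G.neighborSet v).Nonempty := ⟨u, hu⟩
  exact (Set.ncard_pos (Set.toFinite _)).mpr this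

lemma ncard_incidenceSet {α : Type*} (K : SimpleGraph α) (v : α) :
    (K.incidenceSet v).ncard = deg K v := by
  rw [deg, ← Nat.card_coe_set_eq, ← Nat.card_coe_set_eq]
  exact Nat.card_congr (K.incidenceSetEquivNeighborSet v)

lemma HH_nbhd {n : ℕ} (G : SimpleGraph V) (v : V) (i : Fin n) :
    (HH G n).neighborSet (v, i) =
      ((insert v (G.neighborSet v)) ×ˢ
        (insert i ((SimpleGraph.pathGraph n).neighborSet i))) \ {(v, i)} := by
  ext ⟨u, j⟩
  simp only [SimpleGraph.mem_neighborSet, Set.mem_diff, Set.mem_prod, Set.mem_insert_iff,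
    Set.mem_singleton_iff, HH_adj, Prod.mk.injEq]
  have hg : ∀ {a b : V}, G.Adj a b → ¬ a = b := fun h => h.ne
  have hp : ∀ {a b : Fin n}, (SimpleGraph.pathGraph n).Adj a b → ¬ a = b := fun h => h.ne
  constructor
  · rintro (⟨h1, h2⟩ | ⟨h1, h2⟩ | ⟨h1, h2⟩)
    · exact ⟨⟨Or.inl h1.symm, Or.inr h2⟩, fun hc => hp h2 hc.2.symm⟩
    · exact ⟨⟨Or.inr h2, Or.inl h1.symm⟩, fun hc => hg h2 hc.1.symm⟩
    · exact ⟨⟨Or.inr h1, Or.inr h2⟩, fun hc => hg h1 hc.1.symm⟩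
  · rintro ⟨⟨h1 | h1, h2 | h2⟩, h3⟩
    · exact absurd ⟨h1, h2⟩ h3
    · exact Or.inl ⟨h1.symm, h2⟩
    · exact Or.inr (Or.inl ⟨h2.symm, h1⟩)
    · exact Or.inr (Or.inr ⟨h1, h2⟩)

lemma ncard_prod {α β : Type*} (s : Set α) (t : Set β) (hs : s.Finite) (ht : t.Finite) :
    (s ×ˢ t).ncard = s.ncard * t.ncard := by
  rw [← Nat.card_coe_set_eq, ← Nat.card_coe_set_eq, ← Nat.card_coe_set_eq,
    ← Nat.card_prod]
  exact Nat.card_congr (Equiv.Set.prod s t)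

lemma HH_deg {n : ℕ} (G : SimpleGraph V) [Fintype V] (v : V) (i : Fin n) :
    deg (HH G n) (v, i) = (1 + deg G v) * (1 + deg (SimpleGraph.pathGraph n) i) - 1 := by
  rw [deg, HH_nbhd]
  have hmem : ((v, i) : V × Fin n) ∈
      (insert v (G.neighborSet v)) ×ˢ (insert i ((SimpleGraph.pathGraph n).neighborSet i)) :=
    ⟨Set.mem_insert _ _, Set.mem_insert _ _⟩
  rw [Set.ncard_diff_singleton_of_mem hmem]
  rw [ncard_prod _ _ (Set.toFinite _) (Set.toFinite _)]
  rw [Set.ncard_insert_of_notMem (by simp) (Set.toFinite _),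
    Set.ncard_insert_of_notMem (by simp) (Set.toFinite _)]
  rw [deg, deg]
  ring_nf

lemma pdeg_zero {n : ℕ} (hn : 2 ≤ n) :
    deg (SimpleGraph.pathGraph n) (⟨0, by omega⟩ : Fin n) = 1 := by
  have : (SimpleGraph.pathGraph n).neighborSet (⟨0, by omega⟩ : Fin n) =
      {(⟨1, by omega⟩ : Fin n)} := by
    ext j
    simp only [SimpleGraph.mem_neighborSet, pathGraph_adj, Set.mem_singleton_iff, Fin.ext_iff]
    omega
  rw [deg, this, Set.ncard_singleton]

lemma pdeg_one_ge {n : ℕ} (hn : 3 ≤ n) :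
    deg (SimpleGraph.pathGraph n) (⟨1, by omega⟩ : Fin n) = 2 := by
  have : (SimpleGraph.pathGraph n).neighborSet (⟨1, by omega⟩ : Fin n) =
      {(⟨0, by omega⟩ : Fin n), (⟨2, by omega⟩ : Fin n)} := by
    ext j
    simp only [SimpleGraph.mem_neighborSet, pathGraph_adj, Set.mem_insert_iff,
      Set.mem_singleton_iff, Fin.ext_iff]
    omega
  rw [deg, this, Set.ncard_pair (by simp [Fin.ext_iff])]

lemma pdeg_one_two :
    deg (SimpleGraph.pathGraph 2) (⟨1, by omega⟩ : Fin 2) = 1 := by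
  have : (SimpleGraph.pathGraph 2).neighborSet (⟨1, by omega⟩ : Fin 2) =
      {(⟨0, by omega⟩ : Fin 2)} := by
    ext j
    simp only [SimpleGraph.mem_neighborSet, pathGraph_adj, Set.mem_singleton_iff, Fin.ext_iff]
    omega
  rw [deg, this, Set.ncard_singleton]

lemma one_le_pdeg {n : ℕ} (hn : 2 ≤ n) (i : Fin n) :
    1 ≤ deg (SimpleGraph.pathGraph n) i := by
  have : ((SimpleGraph.pathGraph n).neighborSet i).Nonempty := by
    by_cases h : i.val + 1 < n
    · exact ⟨⟨i.val + 1, h⟩, pathGraph_adj.mpr (Or.inl rfl)⟩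
    · have h0 : 0 < i.val := by have := i.isLt; omega
      refine ⟨⟨i.val - 1, by omega⟩, pathGraph_adj.mpr (Or.inr ?_)⟩
      show i.val - 1 + 1 = i.val
      omega
  have := (Set.ncard_pos (Set.toFinite _)).mpr this
  rw [deg]; omega

lemma three_le_degH {n : ℕ} [Fintype V] (G : SimpleGraph V) (hn : 2 ≤ n) (hG : G.Connected)
    (hc : 2 ≤ Fintype.card V) (x : V × Fin n) : 3 ≤ deg (HH G n) x := by
  obtain ⟨v, i⟩ := x
  rw [HH_deg]
  have h1 := one_le_deg G hG hc v
  have h2 := one_le_pdeg hn i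
  have : 2 * 2 ≤ (1 + deg G v) * (1 + deg (SimpleGraph.pathGraph n) i) :=
    Nat.mul_le_mul (by omega) (by omega)
  omega

/-! ### minimum degree / edge-degree facts -/

lemma minDeg_le {α : Type*} (G : SimpleGraph α) (v : α) : minDeg G ≤ deg G v :=
  Nat.sInf_le ⟨v, rfl⟩

lemma exists_minDeg {α : Type*} [Nonempty α] (G : SimpleGraph α) :
    ∃ v, minDeg G = deg G v :=
  Nat.sInf_mem (s := {d | ∃ v, d = deg G v}) ⟨deg G (Classical.arbitrary α), _, rfl⟩

lemma minEdgeDeg_le {α : Type*} (G : SimpleGraph α) {u v : α} (h : G.Adj u v) :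
    minEdgeDeg G ≤ deg G u + deg G v - 2 :=
  Nat.sInf_le ⟨u, v, h, rfl⟩

lemma exists_minEdgeDeg {α : Type*} (G : SimpleGraph α) (hE : ∃ u v, G.Adj u v) :
    ∃ u v, G.Adj u v ∧ minEdgeDeg G = deg G u + deg G v - 2 := by
  obtain ⟨u, v, huv⟩ := hE
  exact Nat.sInf_mem (s := {d | ∃ u v, G.Adj u v ∧ d = deg G u + deg G v - 2})
    ⟨deg G u + deg G v - 2, u, v, huv, rfl⟩

/-! ### `ξ(H) ≤ min (2ξ(G)+4) (5δ(G)+1)` -/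

lemma xiH_le {V : Type*} [Fintype V] (G : SimpleGraph V) (n : ℕ) (hn : 2 ≤ n)
    (hG : G.Connected) (hc : 2 ≤ Fintype.card V) :
    minEdgeDeg (HH G n) ≤ min (2 * minEdgeDeg G + 4) (5 * minDeg G + 1) := by
  have hV : Nonempty V := Fintype.card_pos_iff.mp (by omega)
  have hz : (0 : ℕ) < n := by omega
  refine le_min ?_ ?_
  · -- via a horizontal edge in column 0
    obtain ⟨u, v, huv, hmin⟩ := exists_minEdgeDeg G (by
      obtain ⟨u, hu⟩ := exists_adj G hG hc (Classical.arbitrary V); exact ⟨_, _, hu⟩)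
    have hadj : (HH G n).Adj (u, ⟨0, hz⟩) (v, ⟨0, hz⟩) := Or.inr (Or.inl ⟨rfl, huv⟩)
    have hle := minEdgeDeg_le (HH G n) hadj
    rw [HH_deg, HH_deg, pdeg_zero hn] at hle
    have h1 := one_le_deg G hG hc u
    have h2 := one_le_deg G hG hc v
    omega
  · -- via a vertical edge between columns 0 and 1
    obtain ⟨v, hv⟩ := exists_minDeg G
    have hadj : (HH G n).Adj (v, ⟨0, hz⟩) (v, ⟨1, hn⟩) := adj_vert rfl
    have hle := minEdgeDeg_le (HH G n) hadj
    rw [HH_deg, HH_deg, pdeg_zero hn] at hle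
    have h1 := one_le_deg G hG hc v
    rcases Nat.lt_or_ge n 3 with h3 | h3
    · have hn2 : n = 2 := by omega
      subst hn2
      rw [pdeg_one_two] at hle
      omega
    · rw [pdeg_one_ge h3] at hle
      omega

/-! ### upper bound: a restricted edge-cut of size `ξ(H)` -/

lemma upper_bound {V : Type*} [Fintype V] (G : SimpleGraph V) (n : ℕ) (hn : 2 ≤ n)
    (hG : G.Connected) (hc : 2 ≤ Fintype.card V) :
    ∃ S : Set (Sym2 (V × Fin n)), IsRestrictedEdgeCut (HH G n) S ∧
      S.ncard = minEdgeDeg (HH G n) := by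
  have hV : Nonempty V := Fintype.card_pos_iff.mp (by omega)
  have hz : (0 : ℕ) < n := by omega
  set H := HH G n with hH
  obtain ⟨x, y, hxy, hmin⟩ := exists_minEdgeDeg H
    ⟨((Classical.arbitrary V), ⟨0, hz⟩), ((Classical.arbitrary V), ⟨1, hn⟩), adj_vert rfl⟩
  set S : Set (Sym2 (V × Fin n)) := (H.incidenceSet x ∪ H.incidenceSet y) \ {s(x, y)}
    with hS
  have hxyS : s(x, y) ∉ S := fun h => h.2 rfl
  have hSE : S ⊆ H.edgeSet := fun e he => by
    rcases he.1 with h | h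
    · exact H.incidenceSet_subset x h
    · exact H.incidenceSet_subset y h
  have hxny : x ≠ y := hxy.ne
  -- adjacency in the reduced graph at x and y
  have key1 : ∀ w, (H.deleteEdges S).Adj x w ↔ w = y := by
    intro w
    constructor
    · intro hadj
      rw [SimpleGraph.deleteEdges_adj] at hadj
      obtain ⟨hxw, hnS⟩ := hadj
      have hmem : s(x, w) ∈ H.incidenceSet x := ⟨hxw, Sym2.mem_mk_left x w⟩
      have : s(x, w) ∈ ({s(x, y)} : Set (Sym2 (V × Fin n))) := by
        by_contra hne
        exact hnS ⟨Or.inl hmem, hne⟩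
      rcases Sym2.eq_iff.mp this with ⟨-, h2⟩ | ⟨h1, -⟩
      · exact h2
      · exact absurd h1 hxny
    · rintro rfl
      rw [SimpleGraph.deleteEdges_adj]
      exact ⟨hxy, hxyS⟩
  have key2 : ∀ w, (H.deleteEdges S).Adj y w ↔ w = x := by
    intro w
    constructor
    · intro hadj
      rw [SimpleGraph.deleteEdges_adj] at hadj
      obtain ⟨hyw, hnS⟩ := hadj
      have hmem : s(y, w) ∈ H.incidenceSet y := ⟨hyw, Sym2.mem_mk_left y w⟩
      have : s(y, w) ∈ ({s(x, y)} : Set (Sym2 (V × Fin n))) := by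
        by_contra hne
        exact hnS ⟨Or.inr hmem, hne⟩
      rcases Sym2.eq_iff.mp this with ⟨h1, -⟩ | ⟨-, h2⟩
      · exact absurd h1.symm hxny
      · exact h2
    · rintro rfl
      rw [SimpleGraph.deleteEdges_adj]
      exact ⟨hxy.symm, fun h => hxyS (by rwa [Sym2.eq_swap] at h)⟩
  have hclosed : ∀ a b, (H.deleteEdges S).Adj a b → a ∈ ({x, y} : Set (V × Fin n)) →
      b ∈ ({x, y} : Set (V × Fin n)) := by
    intro a b hab ha
    simp only [Set.mem_insert_iff, Set.mem_singleton_iff] at ha ⊢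
    rcases ha with rfl | rfl
    · exact Or.inr ((key1 b).mp hab)
    · exact Or.inl ((key2 b).mp hab)
  have hreach : ∀ w, (H.deleteEdges S).Reachable x w → w ∈ ({x, y} : Set (V × Fin n)) := by
    intro w hw
    obtain ⟨p⟩ := hw
    exact walk_closed hclosed p (Or.inl rfl)
  have hsupp : ((H.deleteEdges S).connectedComponentMk x).supp = {x, y} := by
    ext w
    rw [SimpleGraph.ConnectedComponent.mem_supp_iff, SimpleGraph.ConnectedComponent.eq]
    constructor
    · intro hw; exact hreach w hw.symm
    · intro hw
      simp only [Set.mem_insert_iff, Set.mem_singleton_iff] at hw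
      rcases hw with h | h
      · rw [h]
      · rw [h]
        exact (SimpleGraph.Adj.reachable ((key1 y).mpr rfl)).symm
  -- a third vertex exists
  have hbig : 2 < Fintype.card (V × Fin n) := by
    rw [Fintype.card_prod, Fintype.card_fin]
    nlinarith
  have hthird : ∃ z : V × Fin n, z ≠ x ∧ z ≠ y := by
    by_contra hcon
    push_neg at hcon
    have : (Finset.univ : Finset (V × Fin n)) ⊆ {x, y} := by
      intro z _
      rcases em (z = x) with rfl | hz
      · simp
      · simp [hcon z hz]
    have := Finset.card_le_card this
    rw [Finset.card_univ] at this
    have h2 : ({x, y} : Finset (V × Fin n)).card ≤ 2 := Finset.card_insert_le _ _ |>.trans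
      (by simp)
    omega
  obtain ⟨z, hzx, hzy⟩ := hthird
  have hnotconn : ¬ (H.deleteEdges S).Connected := by
    intro hconn
    have := hreach z (hconn.preconnected x z)
    simp only [Set.mem_insert_iff, Set.mem_singleton_iff] at this
    rcases this with h | h
    · exact hzx h
    · exact hzy h
  -- every component has at least 2 vertices
  have hcomp : ∀ w : V × Fin n,
      2 ≤ ((H.deleteEdges S).connectedComponentMk w).supp.ncard := by
    intro w
    by_cases hw : w = x ∨ w = y
    · have : (H.deleteEdges S).connectedComponentMk w =
          (H.deleteEdges S).connectedComponentMk x := by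
        rcases hw with rfl | rfl
        · rfl
        · exact SimpleGraph.ConnectedComponent.eq.mpr
            (SimpleGraph.Adj.reachable ((key2 x).mpr rfl))
      rw [this, hsupp, Set.ncard_pair hxny]
    · push_neg at hw
      obtain ⟨hwx, hwy⟩ := hw
      have h3 : 3 ≤ deg H w := three_le_degH G hn hG hc w
      have : ∃ u, H.Adj w u ∧ u ≠ x ∧ u ≠ y := by
        by_contra hcon
        push_neg at hcon
        have hsub : H.neighborSet w ⊆ {x, y} := by
          intro u hu
          rcases em (u = x) with rfl | hux
          · exact Or.inl rfl
          · exact Or.inr (hcon u hu hux)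
        have := Set.ncard_le_ncard hsub (Set.toFinite _)
        rw [Set.ncard_pair hxny] at this
        rw [deg] at h3
        omega
      obtain ⟨u, hwu, hux, huy⟩ := this
      have hnS : s(w, u) ∉ S := by
        intro hmem
        rcases hmem.1 with h | h
        · rcases Sym2.mem_iff.mp h.2 with h' | h'
          · exact hwx h'.symm
          · exact hux h'.symm
        · rcases Sym2.mem_iff.mp h.2 with h' | h'
          · exact hwy h'.symm
          · exact huy h'.symm
      have hadj : (H.deleteEdges S).Adj w u := by
        rw [SimpleGraph.deleteEdges_adj]; exact ⟨hwu, hnS⟩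
      have husupp : u ∈ ((H.deleteEdges S).connectedComponentMk w).supp := by
        rw [SimpleGraph.ConnectedComponent.mem_supp_iff, SimpleGraph.ConnectedComponent.eq]
        exact (SimpleGraph.Adj.reachable hadj).symm
      have hwsupp : w ∈ ((H.deleteEdges S).connectedComponentMk w).supp := by
        rw [SimpleGraph.ConnectedComponent.mem_supp_iff]
      have hsub : ({w, u} : Set (V × Fin n)) ⊆
          ((H.deleteEdges S).connectedComponentMk w).supp := by
        intro a ha
        simp only [Set.mem_insert_iff, Set.mem_singleton_iff] at ha
        rcases ha with rfl | rfl
        · exact hwsupp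
        · exact husupp
      have := Set.ncard_le_ncard hsub (Set.toFinite _)
      rwa [Set.ncard_pair (hwu.ne)] at this
  -- cardinality of S
  have hcard : S.ncard = minEdgeDeg H := by
    have hinter : H.incidenceSet x ∩ H.incidenceSet y = {s(x, y)} :=
      H.incidenceSet_inter_incidenceSet_of_adj hxy
    have huni := Set.ncard_union_add_ncard_inter (H.incidenceSet x) (H.incidenceSet y)
      (Set.toFinite _) (Set.toFinite _)
    rw [hinter, Set.ncard_singleton, ncard_incidenceSet, ncard_incidenceSet] at huni
    have hmemu : s(x, y) ∈ H.incidenceSet x ∪ H.incidenceSet y :=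
      Or.inl ⟨hxy, Sym2.mem_mk_left x y⟩
    have := Set.ncard_diff_singleton_of_mem hmemu
    rw [hS, this]
    have hdx := three_le_degH G hn hG hc x
    have hdy := three_le_degH G hn hG hc y
    omega
  exact ⟨S, ⟨hSE, hnotconn, hcomp⟩, hcard⟩

/-! ### counting: common tools -/

lemma card_le_cross {V : Type*} [Fintype V] {G : SimpleGraph V} {n : ℕ} {X : Set (V × Fin n)}
    {F : Finset (Sym2 (V × Fin n))} (hsub : (F : Set (Sym2 (V × Fin n))) ⊆ cross G n X) :
    F.card ≤ (cross G n X).ncard := by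
  rw [← Set.ncard_coe_finset]
  exact Set.ncard_le_ncard hsub (Set.toFinite _)

lemma key_disjoint {V : Type*} {n : ℕ} {F F' : Finset (Sym2 (V × Fin n))} {k k' : Sym2 V}
    (h : ∀ e ∈ F, Sym2.map Prod.fst e = k) (h' : ∀ e ∈ F', Sym2.map Prod.fst e = k')
    (hne : k ≠ k') : Disjoint F F' := by
  rw [Finset.disjoint_left]
  intro e he he'
  exact hne (((h e he).symm).trans (h' e he'))

lemma sym2V_eq {α : Type*} {a b c d : α} (h : s(a, b) = s(c, d)) :
    (a = c ∧ b = d) ∨ (a = d ∧ b = c) := Sym2.eq_iff.mp h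

noncomputable def Nfin {V : Type*} [Fintype V] (G : SimpleGraph V) (v : V) : Finset V :=
  Finset.univ.filter (fun u => G.Adj v u)

lemma mem_Nfin {V : Type*} [Fintype V] {G : SimpleGraph V} {v u : V} :
    u ∈ Nfin G v ↔ G.Adj v u := by simp [Nfin]

lemma card_Nfin {V : Type*} [Fintype V] (G : SimpleGraph V) (v : V) :
    (Nfin G v).card = deg G v := by
  have : G.neighborSet v = ↑(Nfin G v) := by ext u; simp [Nfin]
  rw [deg, this, Set.ncard_coe_finset]

/-! ### Case I: an edge inside the broken fibers -/

noncomputable def chunk {V : Type*} (G : SimpleGraph V) (n : ℕ) (X : Set (V × Fin n))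
    (v : V) (i1 i2 : Fin n) (u : V) : Finset (Sym2 (V × Fin n)) :=
  {s((u, i1), (v, if ((u, i1) ∈ X ↔ (v, i1) ∈ X) then i2 else i1)),
   s((u, i2), (v, if ((u, i2) ∈ X ↔ (v, i1) ∈ X) then i2 else i1))}

lemma chunk_key {V : Type*} {G : SimpleGraph V} {n : ℕ} {X : Set (V × Fin n)}
    {v : V} {i1 i2 : Fin n} {u : V} :
    ∀ e ∈ chunk G n X v i1 i2 u, Sym2.map Prod.fst e = s(u, v) := by
  intro e he
  rcases Finset.mem_insert.mp he with rfl | he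
  · rfl
  · rw [Finset.mem_singleton.mp he]
    rfl

lemma chunk_card {V : Type*} {G : SimpleGraph V} {n : ℕ} {X : Set (V × Fin n)}
    {v : V} {i1 i2 : Fin n} {u : V} (huv : u ≠ v) (h12 : i1 ≠ i2) :
    (chunk G n X v i1 i2 u).card = 2 := by
  rw [chunk, Finset.card_insert_of_notMem, Finset.card_singleton]
  rw [Finset.mem_singleton]
  intro h
  rcases sym2V_eq h with ⟨h1, -⟩ | ⟨h1, -⟩
  · exact h12 (congrArg Prod.snd h1)
  · exact huv (congrArg Prod.fst h1)

lemma chunk_subset {V : Type*} [Fintype V] {G : SimpleGraph V} {n : ℕ} {X : Set (V × Fin n)}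
    {v : V} {i1 i2 : Fin n} {u : V} (hbr : ((v, i1) ∈ X ↔ ¬ (v, i2) ∈ X))
    (h12 : i1.val + 1 = i2.val) (huv : G.Adj u v) :
    (chunk G n X v i1 i2 u : Set (Sym2 (V × Fin n))) ⊆ cross G n X := by
  have hcr : ∀ l : Fin n, (l = i1 ∨ l = i2) →
      s(((u, l) : V × Fin n), (v, if ((u, l) ∈ X ↔ (v, i1) ∈ X) then i2 else i1)) ∈
        cross G n X := by
    intro l hl
    by_cases hc : ((u, l) ∈ X ↔ (v, i1) ∈ X)
    · rw [if_pos hc]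
      have hadj : (HH G n).Adj (u, l) (v, i2) := by
        apply adj_of_close huv
        rcases hl with rfl | rfl
        · exact Or.inr (Or.inl h12)
        · exact Or.inl rfl
      by_cases hul : (u, l) ∈ X
      · exact mem_cross_of hadj hul (by tauto)
      · exact mem_cross_of' hadj (by tauto) hul
    · rw [if_neg hc]
      have hadj : (HH G n).Adj (u, l) (v, i1) := by
        apply adj_of_close huv
        rcases hl with rfl | rfl
        · exact Or.inl rfl
        · exact Or.inr (Or.inr h12)
      by_cases hul : (u, l) ∈ X
      · exact mem_cross_of hadj hul (by tauto)
      · exact mem_cross_of' hadj (by tauto) hul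
  intro e he
  rcases Finset.mem_insert.mp (Finset.mem_coe.mp he) with rfl | he'
  · exact hcr i1 (Or.inl rfl)
  · rw [Finset.mem_singleton.mp he']
    exact hcr i2 (Or.inr rfl)

lemma caseI {V : Type*} [Fintype V] (G : SimpleGraph V) (n : ℕ) {X : Set (V × Fin n)}
    {v v' : V} (hvv' : G.Adj v v') (hbv : v ∈ Bset X) (hbv' : v' ∈ Bset X) :
    2 * minEdgeDeg G + 4 ≤ (cross G n X).ncard := by
  obtain ⟨i, hi, hbr⟩ := exists_break hbv.1 hbv.2
  obtain ⟨i', hi', hbr'⟩ := exists_break hbv'.1 hbv'.2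
  set a1 : Fin n := ⟨i, by omega⟩
  set a2 : Fin n := ⟨i + 1, hi⟩
  set b1 : Fin n := ⟨i', by omega⟩
  set b2 : Fin n := ⟨i' + 1, hi'⟩
  have ha12 : a1.val + 1 = a2.val := rfl
  have hb12 : b1.val + 1 = b2.val := rfl
  have ha12' : a1 ≠ a2 := by simp [a1, a2, Fin.ext_iff]
  have hb12' : b1 ≠ b2 := by simp [b1, b2, Fin.ext_iff]
  have hvne : v ≠ v' := hvv'.ne
  -- vertical edges
  have hvert : s(((v, a1) : V × Fin n), (v, a2)) ∈ cross G n X := by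
    by_cases hp : (v, a1) ∈ X
    · exact mem_cross_of (adj_vert ha12) hp (by tauto)
    · exact mem_cross_of' (adj_vert ha12) (by tauto) hp
  have hvert' : s(((v', b1) : V × Fin n), (v', b2)) ∈ cross G n X := by
    by_cases hp : (v', b1) ∈ X
    · exact mem_cross_of (adj_vert hb12) hp (by tauto)
    · exact mem_cross_of' (adj_vert hb12) (by tauto) hp
  set F0 : Finset (Sym2 (V × Fin n)) :=
    {s(((v, a1) : V × Fin n), (v, a2)), s(((v', b1) : V × Fin n), (v', b2))}
  set F1 : Finset (Sym2 (V × Fin n)) := (Nfin G v).biUnion (chunk G n X v a1 a2)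
  set F2 : Finset (Sym2 (V × Fin n)) :=
    ((Nfin G v').erase v).biUnion (chunk G n X v' b1 b2)
  have hkey0 : ∀ e ∈ F0, Sym2.map Prod.fst e = s(v, v) ∨ Sym2.map Prod.fst e = s(v', v') := by
    intro e he
    rcases Finset.mem_insert.mp he with rfl | he
    · exact Or.inl rfl
    · rw [Finset.mem_singleton.mp he]; exact Or.inr rfl
  have hkey1 : ∀ e ∈ F1, ∃ u, u ≠ v ∧ G.Adj v u ∧ Sym2.map Prod.fst e = s(u, v) := by
    intro e he
    obtain ⟨u, hu, he⟩ := Finset.mem_biUnion.mp he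
    exact ⟨u, (mem_Nfin.mp hu).ne', mem_Nfin.mp hu, chunk_key e he⟩
  have hkey2 : ∀ e ∈ F2, ∃ u, u ≠ v' ∧ u ≠ v ∧ Sym2.map Prod.fst e = s(u, v') := by
    intro e he
    obtain ⟨u, hu, he⟩ := Finset.mem_biUnion.mp he
    have h1 := Finset.mem_of_mem_erase hu
    exact ⟨u, (mem_Nfin.mp h1).ne', Finset.ne_of_mem_erase hu, chunk_key e he⟩
  -- cardinalities
  have hcard1 : F1.card = 2 * deg G v := by
    rw [Finset.card_biUnion (by
      intro u hu u' hu' hne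
      apply key_disjoint chunk_key chunk_key
      intro h
      rcases sym2V_eq h with ⟨h1, -⟩ | ⟨h1, -⟩
      · exact hne h1
      · exact (mem_Nfin.mp hu).ne' h1)]
    rw [Finset.sum_congr rfl (fun u hu => chunk_card (G := G) (mem_Nfin.mp hu).ne' ha12'),
      Finset.sum_const, smul_eq_mul, card_Nfin]
    ring
  have hcard2 : F2.card = 2 * (deg G v' - 1) := by
    rw [Finset.card_biUnion (by
      intro u hu u' hu' hne
      apply key_disjoint chunk_key chunk_key
      intro h
      rcases sym2V_eq h with ⟨h1, -⟩ | ⟨h1, -⟩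
      · exact hne h1
      · exact (mem_Nfin.mp (Finset.mem_of_mem_erase hu)).ne' h1)]
    rw [Finset.sum_congr rfl (fun u hu =>
      chunk_card (G := G) (mem_Nfin.mp (Finset.mem_of_mem_erase hu)).ne' hb12'),
      Finset.sum_const, smul_eq_mul, Finset.card_erase_of_mem (mem_Nfin.mpr hvv'.symm),
      card_Nfin]
    ring
  have hcard0 : F0.card = 2 := by
    rw [Finset.card_insert_of_notMem, Finset.card_singleton]
    rw [Finset.mem_singleton]
    intro h
    rcases sym2V_eq h with ⟨h1, -⟩ | ⟨h1, -⟩ <;>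
      exact hvne (congrArg Prod.fst h1)
  have hd12 : Disjoint F1 F2 := by
    rw [Finset.disjoint_left]
    intro e he1 he2
    obtain ⟨u, huv, -, hk1⟩ := hkey1 e he1
    obtain ⟨u', hu'v', hu'v, hk2⟩ := hkey2 e he2
    rcases sym2V_eq (hk1.symm.trans hk2) with ⟨-, h2⟩ | ⟨-, h2⟩
    · exact hvne h2
    · exact hu'v h2.symm
  have hd0 : Disjoint F0 (F1 ∪ F2) := by
    rw [Finset.disjoint_left]
    intro e he0 he12
    have hdiag : Sym2.map Prod.fst e = s(v, v) ∨ Sym2.map Prod.fst e = s(v', v') :=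
      hkey0 e he0
    rcases Finset.mem_union.mp he12 with he | he
    · obtain ⟨u, huv, -, hk⟩ := hkey1 e he
      rcases hdiag with h | h
      · rcases sym2V_eq (h.symm.trans hk) with ⟨h1, -⟩ | ⟨-, h2⟩
        · exact huv h1.symm
        · exact huv h2.symm
      · rcases sym2V_eq (h.symm.trans hk) with ⟨-, h2⟩ | ⟨h1, -⟩
        · exact hvne h2.symm
        · exact hvne h1.symm
    · obtain ⟨u, huv', huv, hk⟩ := hkey2 e he
      rcases hdiag with h | h
      · rcases sym2V_eq (h.symm.trans hk) with ⟨-, h2⟩ | ⟨h1, -⟩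
        · exact hvne h2
        · exact hvne h1
      · rcases sym2V_eq (h.symm.trans hk) with ⟨h1, -⟩ | ⟨-, h2⟩
        · exact huv' h1.symm
        · exact huv' h2.symm
  have hsub : ((F0 ∪ (F1 ∪ F2) : Finset (Sym2 (V × Fin n))) : Set (Sym2 (V × Fin n))) ⊆
      cross G n X := by
    intro e he
    rcases Finset.mem_union.mp (Finset.mem_coe.mp he) with he | he
    · rcases Finset.mem_insert.mp he with rfl | he
      · exact hvert
      · rw [Finset.mem_singleton.mp he]; exact hvert'
    · rcases Finset.mem_union.mp he with he | he
      · obtain ⟨u, hu, he⟩ := Finset.mem_biUnion.mp he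
        exact chunk_subset hbr ha12 (mem_Nfin.mp hu).symm (Finset.mem_coe.mpr he)
      · obtain ⟨u, hu, he⟩ := Finset.mem_biUnion.mp he
        exact chunk_subset hbr' hb12 (mem_Nfin.mp (Finset.mem_of_mem_erase hu)).symm
          (Finset.mem_coe.mpr he)
  have htot := card_le_cross hsub
  rw [Finset.card_union_of_disjoint hd0, Finset.card_union_of_disjoint hd12,
    hcard0, hcard1, hcard2] at htot
  have hdv : 1 ≤ deg G v' := by
    have : (G.neighborSet v').Nonempty := ⟨v, hvv'.symm⟩
    have := (Set.ncard_pos (Set.toFinite _)).mpr this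
    exact this
  have hdv2 : 1 ≤ deg G v := by
    have : (G.neighborSet v).Nonempty := ⟨v', hvv'⟩
    exact (Set.ncard_pos (Set.toFinite _)).mpr this
  have hxi := minEdgeDeg_le G hvv'
  omega

/-! ### Case II: a broken fiber whose neighbors are all fully inside `X` -/

lemma caseII {V : Type*} [Fintype V] (G : SimpleGraph V) (n : ℕ) (hn : 2 ≤ n)
    {X : Set (V × Fin n)} {v : V} (hb : v ∈ Bset X)
    (hA : ∀ u, G.Adj v u → u ∈ Aset X)
    (hgy : ∀ a ∈ Xᶜ, ∃ b ∈ Xᶜ, (HH G n).Adj a b) :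
    5 * minDeg G + 1 ≤ (cross G n X).ncard := by
  obtain ⟨j0, hj0⟩ := hb.2
  obtain ⟨b, hbY, hadjb⟩ := hgy (v, j0) hj0
  have hbv : b.1 = v ∧ (SimpleGraph.pathGraph n).Adj j0 b.2 := by
    rcases hadjb with ⟨h1, h2⟩ | ⟨h1, h2⟩ | ⟨h1, h2⟩
    · exact ⟨h1.symm, h2⟩
    · exfalso
      apply hbY
      have := hA b.1 h2
      have hmem := this b.2
      rwa [Prod.mk.eta] at hmem
    · exfalso
      apply hbY
      have := hA b.1 h1
      have hmem := this b.2
      rwa [Prod.mk.eta] at hmem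
  have hbY' : ((v, b.2) : V × Fin n) ∉ X := by
    rw [← hbv.1, Prod.mk.eta]
    exact hbY
  -- get an ordered adjacent pair ⟨k, k+1⟩ with both outside X
  have hpair : ∃ k : ℕ, ∃ hk : k + 1 < n,
      ((v, (⟨k, by omega⟩ : Fin n)) ∉ X) ∧ ((v, (⟨k + 1, hk⟩ : Fin n)) ∉ X) := by
    rcases pathGraph_adj.mp hbv.2 with h | h
    · refine ⟨j0.val, by omega, ?_, ?_⟩
      · rwa [Fin.eta]
      · have : (⟨j0.val + 1, by omega⟩ : Fin n) = b.2 := by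
          rw [Fin.ext_iff]; simpa using h
        rw [this]; exact hbY'
    · refine ⟨b.2.val, by omega, ?_, ?_⟩
      · rwa [Fin.eta]
      · have : (⟨b.2.val + 1, by omega⟩ : Fin n) = j0 := by
          rw [Fin.ext_iff]; simpa using h
        rw [this]; exact hj0
  obtain ⟨k, hk, hk1, hk2⟩ := hpair
  set c1 : Fin n := ⟨k, by omega⟩
  set c2 : Fin n := ⟨k + 1, hk⟩
  have hc12 : c1 ≠ c2 := by simp [c1, c2, Fin.ext_iff]
  -- the two closed neighborhoods have total size at least 5
  have h5 : 5 ≤ (pnb n c1).card + (pnb n c2).card := by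
    have hcase : 0 < k ∨ k + 2 < n := by
      by_contra hcon
      push_neg at hcon
      obtain ⟨hk0, hn2⟩ := hcon
      have hk0' : k = 0 := by omega
      have hn2' : n = 2 := by omega
      obtain ⟨j, hjX⟩ := hb.1
      have : j = c1 ∨ j = c2 := by
        have := j.isLt
        rcases Nat.lt_or_ge j.val 1 with h | h
        · left; rw [Fin.ext_iff]; simp [c1]; omega
        · right; rw [Fin.ext_iff]; simp [c2]; omega
      rcases this with rfl | rfl
      · exact hk1 hjX
      · exact hk2 hjX
    rw [pnb_card, pnb_card]
    simp only [c1, c2]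
    have h1 : k + 1 < n := hk
    by_cases h2 : 0 < k <;> by_cases h3 : k + 1 + 1 < n <;>
      simp [h1, h2, h3] <;> omega
  -- the vertical edge
  obtain ⟨iv, hiv, hvert⟩ := exists_vert (G := G) hb
  set vert : Sym2 (V × Fin n) := s(((v, ⟨iv, by omega⟩) : V × Fin n), (v, ⟨iv + 1, hiv⟩))
  set Fb : Finset (Sym2 (V × Fin n)) :=
    (Nfin G v).biUnion (fun u => fan G n u v ({c1, c2} : Finset (Fin n)))
  have hFbkey : ∀ e ∈ Fb, ∃ u, u ≠ v ∧ Sym2.map Prod.fst e = s(u, v) := by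
    intro e he
    obtain ⟨u, hu, he⟩ := Finset.mem_biUnion.mp he
    exact ⟨u, (mem_Nfin.mp hu).ne', fan_key he⟩
  have hvnotin : vert ∉ Fb := by
    intro hmem
    obtain ⟨u, huv, hk'⟩ := hFbkey vert hmem
    have : Sym2.map Prod.fst vert = s(v, v) := rfl
    rcases sym2V_eq (this.symm.trans hk') with ⟨h1, -⟩ | ⟨-, h2⟩
    · exact huv h1.symm
    · exact huv h2.symm
  have hcardFb : 5 * deg G v ≤ Fb.card := by
    rw [Finset.card_biUnion]
    · calc 5 * deg G v = ∑ _u ∈ Nfin G v, 5 := by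
            rw [Finset.sum_const, smul_eq_mul, card_Nfin]; ring
        _ ≤ ∑ u ∈ Nfin G v, (fan G n u v ({c1, c2} : Finset (Fin n))).card := by
            apply Finset.sum_le_sum
            intro u hu
            rw [card_fan (mem_Nfin.mp hu).ne', Finset.sum_pair hc12]
            omega
    · intro u hu u' hu' hne
      apply key_disjoint (fun e he => fan_key he) (fun e he => fan_key he)
      intro h
      rcases sym2V_eq h with ⟨h1, -⟩ | ⟨h1, -⟩
      · exact hne h1
      · exact (mem_Nfin.mp hu).ne' h1
  have hsub : ((insert vert Fb : Finset (Sym2 (V × Fin n))) : Set (Sym2 (V × Fin n))) ⊆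
      cross G n X := by
    intro e he
    rcases Finset.mem_insert.mp (Finset.mem_coe.mp he) with rfl | he
    · exact hvert
    · obtain ⟨u, hu, he⟩ := Finset.mem_biUnion.mp he
      refine fan_subset_cross (mem_Nfin.mp hu).symm (fun j' => (hA u (mem_Nfin.mp hu)) j')
        ?_ (Finset.mem_coe.mpr he)
      intro j hj
      rcases Finset.mem_insert.mp hj with rfl | hj
      · exact hk1
      · rw [Finset.mem_singleton.mp hj]; exact hk2
  have htot := card_le_cross hsub
  rw [Finset.card_insert_of_notMem hvnotin] at htot
  have hminle : minDeg G ≤ deg G v := minDeg_le G v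
  omega

/-! ### Case III: cut construction -/

section CaseIII

variable {V : Type*} [Fintype V]

noncomputable def afin (G : SimpleGraph V) {n : ℕ} (X : Set (V × Fin n)) (v : V) : Finset V :=
  Finset.univ.filter (fun u => G.Adj v u ∧ u ∈ Aset X)

noncomputable def cfin (G : SimpleGraph V) {n : ℕ} (X : Set (V × Fin n)) (v : V) : Finset V :=
  Finset.univ.filter (fun u => G.Adj v u ∧ u ∈ Cset X)

noncomputable def selv (G : SimpleGraph V) {n : ℕ} (X : Set (V × Fin n)) (v : V) : Finset V :=
  if (cfin G X v).card ≤ (afin G X v).card then cfin G X v else afin G X v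

noncomputable def YfinF {n : ℕ} (X : Set (V × Fin n)) (v : V) : Finset (Fin n) :=
  Finset.univ.filter (fun j => (v, j) ∉ X)

noncomputable def XfinF {n : ℕ} (X : Set (V × Fin n)) (v : V) : Finset (Fin n) :=
  Finset.univ.filter (fun j => (v, j) ∈ X)

noncomputable def PAC (G : SimpleGraph V) {n : ℕ} (X : Set (V × Fin n)) : Finset (V × V) :=
  ((Finset.univ.filter (· ∈ Aset X)) ×ˢ (Finset.univ.filter (· ∈ Cset X))).filter
    (fun p => G.Adj p.1 p.2)

noncomputable def Bf {n : ℕ} (X : Set (V × Fin n)) : Finset V :=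
  Finset.univ.filter (· ∈ Bset X)

noncomputable def Dcut (G : SimpleGraph V) {n : ℕ} (X : Set (V × Fin n)) : Finset (Sym2 V) :=
  ((PAC G X).image fun p => s(p.1, p.2)) ∪
    ((Bf X).biUnion fun v => (selv G X v).image fun u => s(u, v))

noncomputable def Kv (G : SimpleGraph V) {n : ℕ} (X : Set (V × Fin n)) (v : V) :
    Finset (Sym2 (V × Fin n)) :=
  ((afin G X v) ∪ (cfin G X v)).biUnion
    (fun u => fan G n u v (if u ∈ Aset X then YfinF X v else XfinF X v))

lemma mem_afin {G : SimpleGraph V} {n : ℕ} {X : Set (V × Fin n)} {v u : V} :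
    u ∈ afin G X v ↔ G.Adj v u ∧ u ∈ Aset X := by simp [afin]

lemma mem_cfin {G : SimpleGraph V} {n : ℕ} {X : Set (V × Fin n)} {v u : V} :
    u ∈ cfin G X v ↔ G.Adj v u ∧ u ∈ Cset X := by simp [cfin]

lemma mem_PAC {G : SimpleGraph V} {n : ℕ} {X : Set (V × Fin n)} {p : V × V} :
    p ∈ PAC G X ↔ p.1 ∈ Aset X ∧ p.2 ∈ Cset X ∧ G.Adj p.1 p.2 := by
  simp [PAC, Finset.mem_filter, Finset.mem_product, and_assoc]

lemma mem_Bf {n : ℕ} {X : Set (V × Fin n)} {v : V} : v ∈ Bf X ↔ v ∈ Bset X := by simp [Bf]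

lemma mem_selv {G : SimpleGraph V} {n : ℕ} {X : Set (V × Fin n)} {v u : V}
    (h : u ∈ selv G X v) : G.Adj v u ∧ (u ∈ Aset X ∨ u ∈ Cset X) := by
  rw [selv] at h
  split_ifs at h
  · exact ⟨(mem_cfin.mp h).1, Or.inr (mem_cfin.mp h).2⟩
  · exact ⟨(mem_afin.mp h).1, Or.inl (mem_afin.mp h).2⟩

lemma Kv_key {G : SimpleGraph V} {n : ℕ} {X : Set (V × Fin n)} {v : V} :
    ∀ e ∈ Kv G X v, ∃ u, (u ∈ Aset X ∨ u ∈ Cset X) ∧ G.Adj v u ∧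
      Sym2.map Prod.fst e = s(u, v) := by
  intro e he
  obtain ⟨u, hu, he⟩ := Finset.mem_biUnion.mp he
  rcases Finset.mem_union.mp hu with hu | hu
  · exact ⟨u, Or.inl (mem_afin.mp hu).2, (mem_afin.mp hu).1, fan_key he⟩
  · exact ⟨u, Or.inr (mem_cfin.mp hu).2, (mem_cfin.mp hu).1, fan_key he⟩

lemma caseIII (G : SimpleGraph V) (n : ℕ) (hn : 2 ≤ n) {X : Set (V × Fin n)}
    (hind : ∀ v ∈ Bset X, ∀ v' ∈ Bset X, ¬ G.Adj v v')
    (hANe : (Aset X).Nonempty) (hCNe : (Cset X).Nonempty) :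
    (3 * n - 2) * edgeConn G ≤ (cross G n X).ncard := by
  have hn0 : 0 < n := by omega
  -- Step A : `edgeConn G ≤ (Dcut G X).card`
  have hDE : (↑(Dcut G X) : Set (Sym2 V)) ⊆ G.edgeSet := by
    intro e he
    rcases Finset.mem_union.mp (Finset.mem_coe.mp he) with he | he
    · obtain ⟨p, hp, rfl⟩ := Finset.mem_image.mp he
      exact (mem_PAC.mp hp).2.2
    · obtain ⟨v, hv, he⟩ := Finset.mem_biUnion.mp he
      obtain ⟨u, hu, rfl⟩ := Finset.mem_image.mp he
      exact (mem_selv hu).1.symm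
  have hcl : ∀ a b, (G.deleteEdges (↑(Dcut G X) : Set (Sym2 V))).Adj a b →
      a ∈ {w | w ∈ Aset X ∨ (w ∈ Bset X ∧ (cfin G X w).card ≤ (afin G X w).card)} →
      b ∈ {w | w ∈ Aset X ∨ (w ∈ Bset X ∧ (cfin G X w).card ≤ (afin G X w).card)} := by
    intro a b hab ha
    rw [SimpleGraph.deleteEdges_adj] at hab
    obtain ⟨hGab, hnD⟩ := hab
    by_contra hbL
    simp only [Set.mem_setOf_eq] at ha hbL
    push_neg at hbL
    apply hnD
    apply Finset.mem_coe.mpr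
    rcases ha with haA | ⟨haB, hale⟩
    · rcases part_cases (X := X) b with hbA | hbB | hbC
      · exact absurd hbA hbL.1
      · have hble : ¬ (cfin G X b).card ≤ (afin G X b).card := Nat.not_le.mpr (hbL.2 hbB)
        apply Finset.mem_union_right
        apply Finset.mem_biUnion.mpr
        refine ⟨b, mem_Bf.mpr hbB, Finset.mem_image.mpr ⟨a, ?_, rfl⟩⟩
        rw [selv, if_neg hble]
        exact mem_afin.mpr ⟨hGab.symm, haA⟩
      · apply Finset.mem_union_left
        exact Finset.mem_image.mpr ⟨(a, b), mem_PAC.mpr ⟨haA, hbC, hGab⟩, rfl⟩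
    · rcases part_cases (X := X) b with hbA | hbB | hbC
      · exact absurd hbA hbL.1
      · exact absurd hGab (hind a haB b hbB)
      · apply Finset.mem_union_right
        apply Finset.mem_biUnion.mpr
        refine ⟨a, mem_Bf.mpr haB, Finset.mem_image.mpr ⟨b, ?_, Sym2.eq_swap⟩⟩
        rw [selv, if_pos hale]
        exact mem_cfin.mpr ⟨hGab, hbC⟩
  obtain ⟨a0, ha0⟩ := hANe
  obtain ⟨c0, hc0⟩ := hCNe
  have hnc : ¬ (G.deleteEdges (↑(Dcut G X) : Set (Sym2 V))).Connected := by
    intro hcon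
    obtain ⟨w⟩ := hcon.preconnected a0 c0
    have := walk_closed hcl w (Or.inl ha0)
    rcases this with h | ⟨hB, -⟩
    · exact Aset_Cset_disj hn0 h hc0
    · exact Cset_Bset_disj hc0 hB
  have hconn_le : edgeConn G ≤ (Dcut G X).card := by
    apply Nat.sInf_le
    exact ⟨(↑(Dcut G X) : Set (Sym2 V)), hDE, Set.ncard_coe_finset _, hnc⟩
  -- Step B : `(Dcut G X).card ≤ (PAC G X).card + ∑ v in Bf X, (selv G X v).card`
  have hDcard : (Dcut G X).card ≤ (PAC G X).card + ∑ v ∈ Bf X, (selv G X v).card := by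
    calc (Dcut G X).card ≤ ((PAC G X).image fun p => s(p.1, p.2)).card +
          ((Bf X).biUnion fun v => (selv G X v).image fun u => s(u, v)).card :=
        Finset.card_union_le _ _
      _ ≤ (PAC G X).card + ∑ v ∈ Bf X, ((selv G X v).image fun u => s(u, v)).card :=
        Nat.add_le_add Finset.card_image_le Finset.card_biUnion_le
      _ ≤ (PAC G X).card + ∑ v ∈ Bf X, (selv G X v).card :=
        Nat.add_le_add_left (Finset.sum_le_sum fun v _ => Finset.card_image_le) _
  -- Step C : the crossing edges
  have hSXY : ∀ v : V, (∑ j ∈ XfinF X v, (pnb n j).card) + (∑ j ∈ YfinF X v, (pnb n j).card)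
      = 3 * n - 2 := by
    intro v
    rw [← sum_pnb n (by omega)]
    exact Finset.sum_filter_add_sum_filter_not _ _ _
  have hKvcard : ∀ v ∈ Bf X, (selv G X v).card * (3 * n - 2) ≤ (Kv G X v).card := by
    intro v hv
    have hvB : v ∈ Bset X := mem_Bf.mp hv
    have hdisj_ac : Disjoint (afin G X v) (cfin G X v) := by
      rw [Finset.disjoint_left]
      intro u hu hu'
      exact Aset_Cset_disj hn0 (mem_afin.mp hu).2 (mem_cfin.mp hu').2
    have hKcard : (Kv G X v).card =
        ∑ u ∈ afin G X v ∪ cfin G X v,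
          (fan G n u v (if u ∈ Aset X then YfinF X v else XfinF X v)).card := by
      apply Finset.card_biUnion
      intro u hu u' hu' hne
      apply key_disjoint (fun e he => fan_key he) (fun e he => fan_key he)
      intro h
      rcases sym2V_eq h with ⟨h1, -⟩ | ⟨h1, -⟩
      · exact hne h1
      · rcases Finset.mem_union.mp hu with hu | hu
        · exact (mem_afin.mp hu).1.ne' h1
        · exact (mem_cfin.mp hu).1.ne' h1
    have hfanA : ∀ u ∈ afin G X v,
        (fan G n u v (if u ∈ Aset X then YfinF X v else XfinF X v)).card =
          ∑ j ∈ YfinF X v, (pnb n j).card := by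
      intro u hu
      rw [if_pos (mem_afin.mp hu).2, card_fan (mem_afin.mp hu).1.ne']
    have hfanC : ∀ u ∈ cfin G X v,
        (fan G n u v (if u ∈ Aset X then YfinF X v else XfinF X v)).card =
          ∑ j ∈ XfinF X v, (pnb n j).card := by
      intro u hu
      have : u ∉ Aset X := fun h => Aset_Cset_disj hn0 h (mem_cfin.mp hu).2
      rw [if_neg this, card_fan (mem_cfin.mp hu).1.ne']
    rw [hKcard, Finset.sum_union hdisj_ac, Finset.sum_congr rfl hfanA,
      Finset.sum_congr rfl hfanC, Finset.sum_const, Finset.sum_const, smul_eq_mul, smul_eq_mul]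
    have hxy := hSXY v
    rw [selv]
    split_ifs with hca
    · calc (cfin G X v).card * (3 * n - 2)
          = (cfin G X v).card * (∑ j ∈ XfinF X v, (pnb n j).card) +
            (cfin G X v).card * (∑ j ∈ YfinF X v, (pnb n j).card) := by
            rw [← hxy]; ring
        _ ≤ (cfin G X v).card * (∑ j ∈ XfinF X v, (pnb n j).card) +
            (afin G X v).card * (∑ j ∈ YfinF X v, (pnb n j).card) :=
            Nat.add_le_add_left (Nat.mul_le_mul_right _ hca) _
        _ = (afin G X v).card * (∑ j ∈ YfinF X v, (pnb n j).card) +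
            (cfin G X v).card * (∑ j ∈ XfinF X v, (pnb n j).card) := by ring
    · have hac : (afin G X v).card ≤ (cfin G X v).card := le_of_not_ge hca
      calc (afin G X v).card * (3 * n - 2)
          = (afin G X v).card * (∑ j ∈ XfinF X v, (pnb n j).card) +
            (afin G X v).card * (∑ j ∈ YfinF X v, (pnb n j).card) := by
            rw [← hxy]; ring
        _ ≤ (cfin G X v).card * (∑ j ∈ XfinF X v, (pnb n j).card) +
            (afin G X v).card * (∑ j ∈ YfinF X v, (pnb n j).card) :=
            Nat.add_le_add_right (Nat.mul_le_mul_right _ hac) _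
        _ = (afin G X v).card * (∑ j ∈ YfinF X v, (pnb n j).card) +
            (cfin G X v).card * (∑ j ∈ XfinF X v, (pnb n j).card) := by ring
  -- the two parts of the crossing family
  have hPACpart : ((PAC G X).biUnion fun p => fan G n p.1 p.2 Finset.univ).card =
      (PAC G X).card * (3 * n - 2) := by
    rw [Finset.card_biUnion]
    · rw [Finset.sum_congr rfl (fun p hp => by
        rw [card_fan (mem_PAC.mp hp).2.2.ne, sum_pnb n (by omega)]),
        Finset.sum_const, smul_eq_mul]
    · intro p hp p' hp' hne
      apply key_disjoint (fun e he => fan_key he) (fun e he => fan_key he)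
      intro h
      rcases sym2V_eq h with ⟨h1, h2⟩ | ⟨h1, -⟩
      · exact hne (Prod.ext h1 h2)
      · exact Aset_Cset_disj hn0 (mem_PAC.mp hp).1 (by
          rw [h1]; exact (mem_PAC.mp hp').2.1)
  have hBpart : ∑ v ∈ Bf X, (selv G X v).card * (3 * n - 2) ≤
      ((Bf X).biUnion fun v => Kv G X v).card := by
    rw [Finset.card_biUnion]
    · exact Finset.sum_le_sum hKvcard
    · intro v hv v' hv' hne
      rw [Function.onFun, Finset.disjoint_left]
      intro e he he'
      obtain ⟨u, huAC, -, hk⟩ := Kv_key e he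
      obtain ⟨u', hu'AC, -, hk'⟩ := Kv_key e he'
      rcases sym2V_eq (hk.symm.trans hk') with ⟨-, h2⟩ | ⟨h1, -⟩
      · exact hne h2
      · rcases huAC with h | h
        · exact Aset_Bset_disj (by rw [h1] at h; exact h) (mem_Bf.mp hv')
        · exact Cset_Bset_disj (by rw [h1] at h; exact h) (mem_Bf.mp hv')
  have hFdisj : Disjoint ((PAC G X).biUnion fun p => fan G n p.1 p.2 Finset.univ)
      ((Bf X).biUnion fun v => Kv G X v) := by
    rw [Finset.disjoint_left]
    intro e he he'
    obtain ⟨p, hp, hep⟩ := Finset.mem_biUnion.mp he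
    obtain ⟨v, hv, hev⟩ := Finset.mem_biUnion.mp he'
    obtain ⟨u, huAC, -, hk⟩ := Kv_key e hev
    have hkey := fan_key hep
    rcases sym2V_eq (hkey.symm.trans hk) with ⟨-, h2⟩ | ⟨h1, -⟩
    · exact Cset_Bset_disj (by rw [← h2]; exact (mem_PAC.mp hp).2.1) (mem_Bf.mp hv)
    · exact Aset_Bset_disj (by rw [← h1]; exact (mem_PAC.mp hp).1) (mem_Bf.mp hv)
  have hFsub : ((((PAC G X).biUnion fun p => fan G n p.1 p.2 Finset.univ) ∪
      ((Bf X).biUnion fun v => Kv G X v) : Finset (Sym2 (V × Fin n))) :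
      Set (Sym2 (V × Fin n))) ⊆ cross G n X := by
    intro e he
    rcases Finset.mem_union.mp (Finset.mem_coe.mp he) with he | he
    · obtain ⟨p, hp, hep⟩ := Finset.mem_biUnion.mp he
      obtain ⟨hp1, hp2, hp3⟩ := mem_PAC.mp hp
      exact fan_subset_cross hp3 (fun j' => hp1 j') (fun j _ => hp2 j)
        (Finset.mem_coe.mpr hep)
    · obtain ⟨v, hv, hev⟩ := Finset.mem_biUnion.mp he
      obtain ⟨u, hu, heu⟩ := Finset.mem_biUnion.mp hev
      rcases Finset.mem_union.mp hu with hu | hu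
      · obtain ⟨hadj, huA⟩ := mem_afin.mp hu
        rw [if_pos huA] at heu
        refine fan_subset_cross hadj.symm (fun j' => huA j') ?_ (Finset.mem_coe.mpr heu)
        intro j hj
        exact (Finset.mem_filter.mp hj).2
      · obtain ⟨hadj, huC⟩ := mem_cfin.mp hu
        have huA : u ∉ Aset X := fun h => Aset_Cset_disj hn0 h huC
        rw [if_neg huA] at heu
        refine fan_subset_cross' hadj.symm (fun j' => huC j') ?_ (Finset.mem_coe.mpr heu)
        intro j hj
        exact (Finset.mem_filter.mp hj).2
  have htot := card_le_cross hFsub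
  rw [Finset.card_union_of_disjoint hFdisj, hPACpart] at htot
  have hchain : (3 * n - 2) * edgeConn G ≤
      (PAC G X).card * (3 * n - 2) + ∑ v ∈ Bf X, (selv G X v).card * (3 * n - 2) := by
    rw [← Finset.sum_mul]
    calc (3 * n - 2) * edgeConn G ≤ (3 * n - 2) * (Dcut G X).card :=
          Nat.mul_le_mul_left _ hconn_le
      _ ≤ (3 * n - 2) * ((PAC G X).card + ∑ v ∈ Bf X, (selv G X v).card) :=
          Nat.mul_le_mul_left _ hDcard
      _ = (PAC G X).card * (3 * n - 2) + (∑ v ∈ Bf X, (selv G X v).card) * (3 * n - 2) := by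
          ring
  calc (3 * n - 2) * edgeConn G
      ≤ (PAC G X).card * (3 * n - 2) + ∑ v ∈ Bf X, (selv G X v).card * (3 * n - 2) := hchain
    _ ≤ (PAC G X).card * (3 * n - 2) + ((Bf X).biUnion fun v => Kv G X v).card :=
        Nat.add_le_add_left hBpart _
    _ ≤ (cross G n X).ncard := htot

end CaseIII

/-! ### main counting lemma -/

lemma main_count {V : Type*} [Fintype V] (G : SimpleGraph V) (n : ℕ) (hn : 2 ≤ n)
    (X : Set (V × Fin n)) (hne : X.Nonempty) (hcne : Xᶜ.Nonempty)
    (hgx : ∀ a ∈ X, ∃ b ∈ X, (HH G n).Adj a b)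
    (hgy : ∀ a ∈ Xᶜ, ∃ b ∈ Xᶜ, (HH G n).Adj a b) :
    min (min (2 * minEdgeDeg G + 4) (5 * minDeg G + 1)) ((3 * n - 2) * edgeConn G) ≤
      (cross G n X).ncard := by
  have hn0 : 0 < n := by omega
  by_cases hBedge : ∃ v ∈ Bset X, ∃ v' ∈ Bset X, G.Adj v v'
  · obtain ⟨v, hv, v', hv', hadj⟩ := hBedge
    exact le_trans (le_trans (min_le_left _ _) (min_le_left _ _)) (caseI G n hadj hv hv')
  · push_neg at hBedge
    by_cases hII : ∃ v ∈ Bset X, (∀ u, G.Adj v u → u ∉ Aset X) ∨ (∀ u, G.Adj v u → u ∉ Cset X)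
    · obtain ⟨v, hvB, hside⟩ := hII
      rcases hside with hnoA | hnoC
      · -- all neighbors of v lie in `Cset X = Aset Xᶜ` : apply case II to the complement
        refine le_trans (le_trans (min_le_left _ _) (min_le_right _ _)) ?_
        rw [← cross_compl X]
        apply caseII G n hn (v := v) (X := Xᶜ)
        · rw [Bset_compl]; exact hvB
        · intro u hu
          rw [Aset_compl]
          rcases part_cases (X := X) u with hA | hB | hC
          · exact absurd hA (hnoA u hu)
          · exact absurd hu (hBedge v hvB u hB)
          · exact hC
        · intro a ha
          rw [compl_compl] at ha
          obtain ⟨b, hb, hadj⟩ := hgx a ha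
          exact ⟨b, by rw [compl_compl]; exact hb, hadj⟩
      · -- all neighbors of v lie in `Aset X` : apply case II directly
        refine le_trans (le_trans (min_le_left _ _) (min_le_right _ _)) ?_
        apply caseII G n hn hvB ?_ hgy
        intro u hu
        rcases part_cases (X := X) u with hA | hB | hC
        · exact hA
        · exact absurd hu (hBedge v hvB u hB)
        · exact absurd hC (hnoC u hu)
    · push_neg at hII
      have hANe : (Aset X).Nonempty := by
        by_cases hB : (Bset X).Nonempty
        · obtain ⟨v, hv⟩ := hB
          obtain ⟨⟨u, -, huA⟩, -⟩ := hII v hv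
          exact ⟨u, huA⟩
        · rw [Set.not_nonempty_iff_eq_empty] at hB
          obtain ⟨⟨a1, a2⟩, ha⟩ := hne
          rcases part_cases (X := X) a1 with hA | hBm | hC
          · exact ⟨a1, hA⟩
          · rw [hB] at hBm; exact absurd hBm (Set.notMem_empty _)
          · exact absurd ha (hC a2)
      have hCNe : (Cset X).Nonempty := by
        by_cases hB : (Bset X).Nonempty
        · obtain ⟨v, hv⟩ := hB
          obtain ⟨-, u, -, huC⟩ := hII v hv
          exact ⟨u, huC⟩
        · rw [Set.not_nonempty_iff_eq_empty] at hB
          obtain ⟨⟨c1, c2⟩, hcm⟩ := hcne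
          rcases part_cases (X := X) c1 with hA | hBm | hC
          · exact absurd (hA c2) hcm
          · rw [hB] at hBm; exact absurd hBm (Set.notMem_empty _)
          · exact ⟨c1, hC⟩
      exact le_trans (min_le_right _ _) (caseIII G n hn hBedge hANe hCNe)

/-! ### bridge from restricted edge-cuts -/

lemma bridge {V : Type*} [Fintype V] (G : SimpleGraph V) (n : ℕ) (hn : 2 ≤ n)
    (hc : 2 ≤ Fintype.card V) (S : Set (Sym2 (V × Fin n)))
    (hS : IsRestrictedEdgeCut (HH G n) S) :
    min (min (2 * minEdgeDeg G + 4) (5 * minDeg G + 1)) ((3 * n - 2) * edgeConn G) ≤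
      S.ncard := by
  obtain ⟨hSE, hdis, hcomp⟩ := hS
  have hVne : Nonempty V := Fintype.card_pos_iff.mp (by omega)
  have hVFn : Nonempty (V × Fin n) := ⟨(Classical.arbitrary V, ⟨0, by omega⟩)⟩
  set K := (HH G n).deleteEdges S with hK
  set v0 := Classical.arbitrary (V × Fin n) with hv0
  set X := (K.connectedComponentMk v0).supp with hX
  have hmemX : ∀ a : V × Fin n, a ∈ X ↔ K.connectedComponentMk a = K.connectedComponentMk v0 :=
    fun a => SimpleGraph.ConnectedComponent.mem_supp_iff _ _
  have hv0X : v0 ∈ X := (hmemX v0).mpr rfl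
  have hcne : Xᶜ.Nonempty := by
    by_contra hcon
    rw [Set.not_nonempty_iff_eq_empty] at hcon
    apply hdis
    rw [SimpleGraph.connected_iff]
    refine ⟨?_, hVFn⟩
    intro x y
    have hx : x ∈ X := by
      by_contra hx; exact (Set.eq_empty_iff_forall_notMem.mp hcon x) hx
    have hy : y ∈ X := by
      by_contra hy; exact (Set.eq_empty_iff_forall_notMem.mp hcon y) hy
    have h1 := (hmemX x).mp hx
    have h2 := (hmemX y).mp hy
    exact (SimpleGraph.ConnectedComponent.eq.mp (h1.trans h2.symm))
  have hgood : ∀ a : V × Fin n, ∃ b, K.Adj a b := by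
    intro a
    have h2 := hcomp a
    have hex : ∃ b ∈ (K.connectedComponentMk a).supp, b ≠ a := by
      by_contra hcon
      push_neg at hcon
      have hsub : (K.connectedComponentMk a).supp ⊆ {a} := fun b hb => hcon b hb
      have := Set.ncard_le_ncard hsub (Set.finite_singleton a)
      rw [Set.ncard_singleton] at this
      omega
    obtain ⟨b, hb, hba⟩ := hex
    have hreach : K.Reachable a b :=
      (SimpleGraph.ConnectedComponent.eq.mp
        ((SimpleGraph.ConnectedComponent.mem_supp_iff _ _).mp hb)).symm
    obtain ⟨w⟩ := hreach
    cases w with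
    | nil => exact absurd rfl hba
    | cons h p => exact ⟨_, h⟩
  have hsame : ∀ a b : V × Fin n, K.Adj a b → a ∈ X → b ∈ X := by
    intro a b hab ha
    rw [hmemX] at ha ⊢
    have : K.connectedComponentMk b = K.connectedComponentMk a :=
      SimpleGraph.ConnectedComponent.eq.mpr (SimpleGraph.Adj.reachable hab).symm
    rw [this, ha]
  have hgx : ∀ a ∈ X, ∃ b ∈ X, (HH G n).Adj a b := by
    intro a ha
    obtain ⟨b, hab⟩ := hgood a
    exact ⟨b, hsame a b hab ha, (SimpleGraph.deleteEdges_adj.mp hab).1⟩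
  have hgy : ∀ a ∈ Xᶜ, ∃ b ∈ Xᶜ, (HH G n).Adj a b := by
    intro a ha
    obtain ⟨b, hab⟩ := hgood a
    refine ⟨b, ?_, (SimpleGraph.deleteEdges_adj.mp hab).1⟩
    intro hbX
    exact ha (hsame b a hab.symm hbX)
  have hsub : cross G n X ⊆ S := by
    rintro e ⟨a, b, hadj, haX, hbX, rfl⟩
    by_contra hnS
    exact hbX (hsame a b (SimpleGraph.deleteEdges_adj.mpr ⟨hadj, hnS⟩) haX)
  have hmc := main_count G n hn X ⟨v0, hv0X⟩ hcne hgx hgy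
  exact hmc.trans (Set.ncard_le_ncard hsub (Set.toFinite S))

end StrongAux

open StrongAux in
theorem maximallyRestricted_strongProd_pathGraph {V : Type*} [Fintype V]
    (G : SimpleGraph V) (m n : ℕ) (hm : Fintype.card V = m) (hnt : 2 ≤ m)
    (hG : G.Connected) (hn : 2 ≤ n)
    (h : min (2 * minEdgeDeg G + 4) (5 * minDeg G + 1) ≤
      min ((3 * n - 2) * edgeConn G) (m + 2 * numEdges G)) :
    restEdgeConn (strongProd G (SimpleGraph.pathGraph n)) =
      minEdgeDeg (strongProd G (SimpleGraph.pathGraph n)) := by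
  subst hm
  have hc : 2 ≤ Fintype.card V := hnt
  obtain ⟨S0, hS0cut, hS0card⟩ := upper_bound G n hn hG hc
  have hxiH := xiH_le G n hn hG hc
  have hmu : min (2 * minEdgeDeg G + 4) (5 * minDeg G + 1) ≤ (3 * n - 2) * edgeConn G :=
    h.trans (min_le_left _ _)
  show sInf {k | ∃ S : Set (Sym2 (V × Fin n)),
      IsRestrictedEdgeCut (strongProd G (SimpleGraph.pathGraph n)) S ∧ S.ncard = k} =
    minEdgeDeg (strongProd G (SimpleGraph.pathGraph n))
  apply le_antisymm
  · apply Nat.sInf_le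
    exact ⟨S0, hS0cut, hS0card⟩
  · refine le_csInf ⟨S0.ncard, ⟨S0, hS0cut, rfl⟩⟩ ?_
    rintro k ⟨S, hScut, rfl⟩
    have hb := bridge G n hn hc S hScut
    rw [min_eq_left hmu] at hb
    exact le_trans hxiH hb
end

section
/- Let G be a connected nontrivial simple graph with m vertices and let n ≥ 3. If min{3n·λ(G), 2·(m + 2·e(G))} ≥ 6·δ(G) + 2, then the strong product G ⊠ C_n is maximally restricted edge-connected, i.e., λ′(G ⊠ C_n) = ξ(G ⊠ C_n). -/
open Finset
open Fin.NatCast Fin.CommRing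

attribute [local instance] Classical.propDecidable

section Cyc

variable {n : ℕ} [NeZero n]

lemma fin_one_ne_zero (hn : 3 ≤ n) : (1 : Fin n) ≠ 0 := by
  intro h
  have h1 : ((1:ℕ) : Fin n) = 0 := by rw [Nat.cast_one]; exact h
  rw [Fin.natCast_eq_zero] at h1
  have := Nat.le_of_dvd one_pos h1
  omega

lemma fin_two_ne_zero (hn : 3 ≤ n) : (2 : Fin n) ≠ 0 := by
  intro h
  have h1 : ((2:ℕ) : Fin n) = 0 := by rw [Nat.cast_ofNat]; exact h
  rw [Fin.natCast_eq_zero] at h1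
  have := Nat.le_of_dvd (by norm_num) h1
  omega

lemma fin_succ_ne (hn : 3 ≤ n) (a : Fin n) : a + 1 ≠ a := by
  intro h
  exact fin_one_ne_zero hn (by rwa [add_eq_left] at h)

lemma fin_pred_ne (hn : 3 ≤ n) (a : Fin n) : a - 1 ≠ a := by
  intro h
  exact fin_one_ne_zero hn (by rwa [sub_eq_self] at h)

lemma fin_succ_ne_pred (hn : 3 ≤ n) (a : Fin n) : a + 1 ≠ a - 1 := by
  intro h
  rw [sub_eq_add_neg] at h
  have h1 : (1 : Fin n) = -1 := add_left_cancel h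
  have h2 : (2 : Fin n) = 0 := by
    rw [eq_neg_iff_add_eq_zero] at h1
    rwa [one_add_one_eq_two] at h1
  exact fin_two_ne_zero hn h2

lemma fin_closure_succ {W : Finset (Fin n)} (hne : W.Nonempty)
    (hcl : ∀ w ∈ W, w + 1 ∈ W) : W = univ := by
  obtain ⟨p, hp⟩ := hne
  have key : ∀ t : ℕ, p + (t : Fin n) ∈ W := by
    intro t
    induction t with
    | zero => simpa using hp
    | succ t ih =>
        have : p + ((t+1 : ℕ) : Fin n) = (p + (t : Fin n)) + 1 := by
          push_cast
          ring
        rw [this]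
        exact hcl _ ih
  apply Finset.eq_univ_of_forall
  intro b
  have : b = p + ((((b - p).val : ℕ)) : Fin n) := by
    rw [Fin.cast_val_eq_self]
    ring
  rw [this]
  exact key _

lemma fin_closure_pred {W : Finset (Fin n)} (hne : W.Nonempty)
    (hcl : ∀ w ∈ W, w - 1 ∈ W) : W = univ := by
  obtain ⟨p, hp⟩ := hne
  have key : ∀ t : ℕ, p - (t : Fin n) ∈ W := by
    intro t
    induction t with
    | zero => simpa using hp
    | succ t ih =>
        have : p - ((t+1 : ℕ) : Fin n) = (p - (t : Fin n)) - 1 := by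
          push_cast
          ring
        rw [this]
        exact hcl _ ih
  apply Finset.eq_univ_of_forall
  intro b
  have : b = p - ((((p - b).val : ℕ)) : Fin n) := by
    rw [Fin.cast_val_eq_self]
    ring
  rw [this]
  exact key _

lemma fin_doubling (c : Fin n) : ∃ t : ℕ, c = ((2*t : ℕ) : Fin n) ∨ c = ((2*t+1 : ℕ) : Fin n) := by
  rcases Nat.even_or_odd c.val with ⟨k, hk⟩ | ⟨k, hk⟩
  · refine ⟨k, Or.inl ?_⟩
    rw [← Fin.cast_val_eq_self c, hk, two_mul]
  · exact ⟨k, Or.inr (by rw [← Fin.cast_val_eq_self c, hk])⟩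

/-- pairs `(i,j)` with `i ∈ S`, `j ∈ T`, `j ∈ {i, i+1, i-1}`. -/
noncomputable def cntP (S T : Finset (Fin n)) : Finset (Fin n × Fin n) :=
  (S ×ˢ T).filter (fun p => p.2 = p.1 ∨ p.2 = p.1 + 1 ∨ p.2 = p.1 - 1)

noncomputable def cnt (S T : Finset (Fin n)) : ℕ := (cntP S T).card

lemma mem_image_sub_one {W : Finset (Fin n)} {i : Fin n} :
    i ∈ W.image (· - 1) ↔ i + 1 ∈ W := by
  simp only [mem_image]
  constructor
  · rintro ⟨j, hj, rfl⟩; simpa using hj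
  · intro h; exact ⟨i + 1, h, by ring⟩

lemma mem_image_add_one {W : Finset (Fin n)} {i : Fin n} :
    i ∈ W.image (· + 1) ↔ i - 1 ∈ W := by
  simp only [mem_image]
  constructor
  · rintro ⟨j, hj, rfl⟩; simpa using hj
  · intro h; exact ⟨i - 1, h, by ring⟩

lemma piece1 (S T : Finset (Fin n)) :
    (S ×ˢ T).filter (fun p => p.2 = p.1) = (S ∩ T).image (fun i => (i,i)) := by
  ext ⟨i, j⟩
  simp only [mem_filter, mem_product, mem_image, mem_inter, Prod.mk.injEq]
  constructor
  · rintro ⟨⟨h1, h2⟩, h3⟩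
    exact ⟨i, ⟨h1, by rwa [← h3]⟩, rfl, h3.symm⟩
  · rintro ⟨a, ⟨h1, h2⟩, rfl, rfl⟩
    exact ⟨⟨h1, h2⟩, rfl⟩

lemma piece2 (S T : Finset (Fin n)) :
    (S ×ˢ T).filter (fun p => p.2 = p.1 + 1) = (S ∩ T.image (· - 1)).image (fun i => (i,i+1)) := by
  ext ⟨i, j⟩
  simp only [mem_filter, mem_product, mem_image, mem_inter, Prod.mk.injEq]
  constructor
  · rintro ⟨⟨h1, h2⟩, h3⟩
    exact ⟨i, ⟨h1, ⟨j, h2, by rw [h3, add_sub_cancel_right]⟩⟩, rfl, h3.symm⟩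
  · rintro ⟨a, ⟨h1, b, hb, rfl⟩, rfl, rfl⟩
    exact ⟨⟨h1, by rwa [sub_add_cancel]⟩, rfl⟩

lemma piece3 (S T : Finset (Fin n)) :
    (S ×ˢ T).filter (fun p => p.2 = p.1 - 1) = (S ∩ T.image (· + 1)).image (fun i => (i,i-1)) := by
  ext ⟨i, j⟩
  simp only [mem_filter, mem_product, mem_image, mem_inter, Prod.mk.injEq]
  constructor
  · rintro ⟨⟨h1, h2⟩, h3⟩
    exact ⟨i, ⟨h1, ⟨j, h2, by rw [h3, sub_add_cancel]⟩⟩, rfl, h3.symm⟩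
  · rintro ⟨a, ⟨h1, b, hb, rfl⟩, rfl, rfl⟩
    exact ⟨⟨h1, by rwa [add_sub_cancel_right]⟩, rfl⟩

lemma cnt_eq (hn : 3 ≤ n) (S T : Finset (Fin n)) :
    cnt S T = (S ∩ T).card + (S ∩ T.image (· - 1)).card + (S ∩ T.image (· + 1)).card := by
  classical
  have hsplit : cntP S T = ((S ×ˢ T).filter (fun p => p.2 = p.1))
      ∪ ((S ×ˢ T).filter (fun p => p.2 = p.1 + 1))
      ∪ ((S ×ˢ T).filter (fun p => p.2 = p.1 - 1)) := by
    rw [cntP, ← Finset.filter_or, ← Finset.filter_or]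
    apply Finset.filter_congr
    intro p _
    simp only [or_assoc]
  have hd1 : Disjoint ((S ×ˢ T).filter (fun p => p.2 = p.1))
      ((S ×ˢ T).filter (fun p => p.2 = p.1 + 1)) := by
    rw [Finset.disjoint_filter]
    intro p _ h1 h2
    exact fin_succ_ne hn p.1 (by rw [← h2, h1])
  have hd2 : Disjoint (((S ×ˢ T).filter (fun p => p.2 = p.1))
      ∪ ((S ×ˢ T).filter (fun p => p.2 = p.1 + 1)))
      ((S ×ˢ T).filter (fun p => p.2 = p.1 - 1)) := by
    rw [Finset.disjoint_union_left]
    constructor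
    · rw [Finset.disjoint_filter]
      intro p _ h1 h2
      exact fin_pred_ne hn p.1 (by rw [← h2, h1])
    · rw [Finset.disjoint_filter]
      intro p _ h1 h2
      exact fin_succ_ne_pred hn p.1 (by rw [← h1, h2])
  have hinj1 : Function.Injective (fun i : Fin n => (i, i)) := by
    intro a b h; exact congrArg Prod.fst h
  have hinj2 : Function.Injective (fun i : Fin n => (i, i+1)) := by
    intro a b h; exact congrArg Prod.fst h
  have hinj3 : Function.Injective (fun i : Fin n => (i, i-1)) := by
    intro a b h; exact congrArg Prod.fst h
  rw [cnt, hsplit, Finset.card_union_of_disjoint hd2, Finset.card_union_of_disjoint hd1,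
    piece1, piece2, piece3, Finset.card_image_of_injective _ hinj1,
    Finset.card_image_of_injective _ hinj2, Finset.card_image_of_injective _ hinj3]

lemma card_image_add_one (W : Finset (Fin n)) : (W.image (· + 1)).card = W.card :=
  Finset.card_image_of_injective _ (add_left_injective 1)

lemma card_image_sub_one (W : Finset (Fin n)) : (W.image (· - 1)).card = W.card :=
  Finset.card_image_of_injective _ (sub_left_injective)

lemma cnt_univ_left (hn : 3 ≤ n) (T : Finset (Fin n)) : cnt univ T = 3 * T.card := by
  rw [cnt_eq hn]
  simp only [Finset.univ_inter, card_image_add_one, card_image_sub_one]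
  ring

end Cyc
section Cyc2

open Finset
variable {n : ℕ} [NeZero n]

lemma fin_not_image_succ_subset (hn : 3 ≤ n) {W : Finset (Fin n)} (hW : W.Nonempty)
    (hWproper : W ≠ univ) : ¬ (W.image (· + 1) ⊆ W) := by
  intro hsub
  apply hWproper
  apply fin_closure_succ hW
  intro w hw
  exact hsub (Finset.mem_image_of_mem _ hw)

lemma fin_not_image_pred_subset (hn : 3 ≤ n) {W : Finset (Fin n)} (hW : W.Nonempty)
    (hWproper : W ≠ univ) : ¬ (W.image (· - 1) ⊆ W) := by
  intro hsub
  apply hWproper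
  apply fin_closure_pred hW
  intro w hw
  exact hsub (Finset.mem_image_of_mem _ hw)

lemma fin_nbhd (hn : 3 ≤ n) {W : Finset (Fin n)} (hW : W.Nonempty) {z : Fin n}
    (hz1 : z ∉ W) (hz2 : z ∉ W.image (· + 1)) (hz3 : z ∉ W.image (· - 1)) :
    W.card + 2 ≤ (W ∪ W.image (· + 1) ∪ W.image (· - 1)).card := by
  classical
  set Wp := W.image (· + 1) with hWp
  set Wm := W.image (· - 1) with hWm
  have hWproper : W ≠ univ := fun h => hz1 (h ▸ Finset.mem_univ z)
  have hDp : (Wp \ W).Nonempty := Finset.sdiff_nonempty.mpr (fin_not_image_succ_subset hn hW hWproper)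
  have hDm : (Wm \ W).Nonempty := Finset.sdiff_nonempty.mpr (fin_not_image_pred_subset hn hW hWproper)
  have hMeq : W ∪ Wp ∪ Wm = W ∪ ((Wp \ W) ∪ (Wm \ W)) := by
    ext a
    simp only [Finset.mem_union, Finset.mem_sdiff]
    tauto
  have hdisj : Disjoint W ((Wp \ W) ∪ (Wm \ W)) := by
    rw [Finset.disjoint_union_right]
    exact ⟨Finset.disjoint_sdiff, Finset.disjoint_sdiff⟩
  have hcard : (W ∪ Wp ∪ Wm).card = W.card + ((Wp \ W) ∪ (Wm \ W)).card := by
    rw [hMeq, Finset.card_union_of_disjoint hdisj]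
  rw [hcard]
  have hne : ((Wp \ W) ∪ (Wm \ W)).Nonempty := hDp.mono Finset.subset_union_left
  rcases Nat.lt_or_ge (((Wp \ W) ∪ (Wm \ W)).card) 2 with hlt | hge
  · exfalso
    have h1 : ((Wp \ W) ∪ (Wm \ W)).card = 1 := by
      have := Finset.card_pos.mpr hne
      omega
    obtain ⟨c, hc⟩ := Finset.card_eq_one.mp h1
    have hDpc : Wp \ W = {c} := by
      have hsub : Wp \ W ⊆ {c} := hc ▸ Finset.subset_union_left
      rw [Finset.eq_singleton_iff_nonempty_unique_mem]
      exact ⟨hDp, fun x hx => Finset.mem_singleton.mp (hsub hx)⟩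
    have hDmc : Wm \ W = {c} := by
      have hsub : Wm \ W ⊆ {c} := hc ▸ Finset.subset_union_right
      rw [Finset.eq_singleton_iff_nonempty_unique_mem]
      exact ⟨hDm, fun x hx => Finset.mem_singleton.mp (hsub hx)⟩
    -- insert c W is closed under successor
    have hclosed : ∀ w ∈ insert c W, w + 1 ∈ insert c W := by
      intro w hw
      rcases Finset.mem_insert.mp hw with rfl | hwW
      · -- w = c ∈ Wm \ W, so c = w0 - 1 with w0 ∈ W, c + 1 = w0 ∈ W
        have hcWm : w ∈ Wm := (Finset.mem_sdiff.mp (hDmc ▸ Finset.mem_singleton_self w)).1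
        obtain ⟨w0, hw0, hw0c⟩ := Finset.mem_image.mp hcWm
        apply Finset.mem_insert_of_mem
        rw [← hw0c, sub_add_cancel]
        exact hw0
      · have : w + 1 ∈ Wp := Finset.mem_image_of_mem _ hwW
        by_cases h : w + 1 ∈ W
        · exact Finset.mem_insert_of_mem h
        · have : w + 1 ∈ Wp \ W := Finset.mem_sdiff.mpr ⟨this, h⟩
          rw [hDpc] at this
          rw [Finset.mem_singleton.mp this]
          exact Finset.mem_insert_self c W
    have huniv : insert c W = univ :=
      fin_closure_succ ⟨c, Finset.mem_insert_self c W⟩ hclosed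
    have hz4 : z ∈ insert c W := huniv ▸ Finset.mem_univ z
    rcases Finset.mem_insert.mp hz4 with rfl | hzW
    · exact hz2 (Finset.mem_sdiff.mp (hDpc ▸ Finset.mem_singleton_self z)).1
    · exact hz1 hzW
  · omega

lemma cnt_lower (hn : 3 ≤ n) {U W : Finset (Fin n)} (hU : U.Nonempty) (hW : W.Nonempty) :
    U.card + W.card + 2 ≤ cnt U W + n := by
  classical
  have hceq := cnt_eq hn U W
  set Wp := W.image (· + 1) with hWpdef
  set Wm := W.image (· - 1) with hWmdef
  have hcWp : Wp.card = W.card := card_image_add_one W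
  have hcWm : Wm.card = W.card := card_image_sub_one W
  have e1 : U.card + W.card ≤ (U ∩ W).card + n := by
    have h := Finset.card_inter_add_card_union U W
    have h2 : (U ∪ W).card ≤ n := by simpa using Finset.card_le_univ (U ∪ W)
    omega
  have e2 : U.card + W.card ≤ (U ∩ Wm).card + n := by
    have h := Finset.card_inter_add_card_union U Wm
    have h2 : (U ∪ Wm).card ≤ n := by simpa using Finset.card_le_univ (U ∪ Wm)
    omega
  have e3 : U.card + W.card ≤ (U ∩ Wp).card + n := by
    have h := Finset.card_inter_add_card_union U Wp
    have h2 : (U ∪ Wp).card ≤ n := by simpa using Finset.card_le_univ (U ∪ Wp)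
    omega
  rcases le_or_gt (n + 1) (U.card + W.card) with hbig | hsmall
  · omega
  -- now U.card + W.card ≤ n
  by_cases h0 : cnt U W = 0
  · -- direct: U is disjoint from W ∪ Wp ∪ Wm
    have ha : U ∩ W = ∅ := by
      rw [← Finset.card_eq_zero]; omega
    have hb : U ∩ Wm = ∅ := by
      rw [← Finset.card_eq_zero]; omega
    have hc : U ∩ Wp = ∅ := by
      rw [← Finset.card_eq_zero]; omega
    obtain ⟨z, hz⟩ := hU
    have hz1 : z ∉ W := fun h => (Finset.eq_empty_iff_forall_notMem.mp ha z) (Finset.mem_inter.mpr ⟨hz, h⟩)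
    have hz2 : z ∉ Wp := fun h => (Finset.eq_empty_iff_forall_notMem.mp hc z) (Finset.mem_inter.mpr ⟨hz, h⟩)
    have hz3 : z ∉ Wm := fun h => (Finset.eq_empty_iff_forall_notMem.mp hb z) (Finset.mem_inter.mpr ⟨hz, h⟩)
    have hnb := fin_nbhd hn hW hz1 hz2 hz3
    rw [← hWpdef, ← hWmdef] at hnb
    have hdisjU : Disjoint U (W ∪ Wp ∪ Wm) := by
      rw [Finset.disjoint_union_right, Finset.disjoint_union_right]
      refine ⟨⟨?_, ?_⟩, ?_⟩ <;> rw [Finset.disjoint_iff_inter_eq_empty] <;> assumption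
    have : U.card + (W ∪ Wp ∪ Wm).card ≤ n := by
      rw [← Finset.card_union_of_disjoint hdisjU]
      simpa using Finset.card_le_univ (U ∪ (W ∪ Wp ∪ Wm))
    omega
  by_cases hsm2 : U.card + W.card + 1 ≤ n
  · -- cnt ≥ 1 suffices
    have : 1 ≤ cnt U W := Nat.one_le_iff_ne_zero.mpr h0
    omega
  -- U.card + W.card = n
  have hsum : U.card + W.card = n := by omega
  by_contra hcon
  push_neg at hcon
  have hcnt1 : cnt U W = 1 := by omega
  -- case analysis on which term is 1
  by_cases ha0 : (U ∩ W).card = 0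
  · -- U = univ \ W, and both shifted differences give ≥ 2
    have hUW : U ∩ W = ∅ := Finset.card_eq_zero.mp ha0
    have hUeq : U = univ \ W := by
      apply Finset.eq_of_subset_of_card_le
      · rw [Finset.subset_sdiff]
        exact ⟨Finset.subset_univ _, Finset.disjoint_iff_inter_eq_empty.mpr hUW⟩
      · rw [Finset.card_sdiff_of_subset (Finset.subset_univ _), Finset.card_univ, Fintype.card_fin]
        omega
    have hWproper : W ≠ univ := by
      intro h
      obtain ⟨u, hu⟩ := hU
      have : u ∈ U ∩ W := Finset.mem_inter.mpr ⟨hu, h ▸ Finset.mem_univ u⟩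
      rw [hUW] at this
      exact absurd this (Finset.notMem_empty u)
    have hbp : 1 ≤ (U ∩ Wp).card := by
      obtain ⟨d, hd⟩ := Finset.sdiff_nonempty.mpr (fin_not_image_succ_subset hn hW hWproper)
      rw [Finset.mem_sdiff] at hd
      apply Finset.card_pos.mpr
      exact ⟨d, Finset.mem_inter.mpr ⟨hUeq ▸ Finset.mem_sdiff.mpr ⟨Finset.mem_univ d, hd.2⟩, hd.1⟩⟩
    have hbm : 1 ≤ (U ∩ Wm).card := by
      obtain ⟨d, hd⟩ := Finset.sdiff_nonempty.mpr (fin_not_image_pred_subset hn hW hWproper)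
      rw [Finset.mem_sdiff] at hd
      apply Finset.card_pos.mpr
      exact ⟨d, Finset.mem_inter.mpr ⟨hUeq ▸ Finset.mem_sdiff.mpr ⟨Finset.mem_univ d, hd.2⟩, hd.1⟩⟩
    omega
  · -- (U ∩ W).card = 1, shifts are empty
    have ha1 : (U ∩ W).card = 1 := by omega
    have hb0 : (U ∩ Wm).card = 0 := by omega
    have hc0 : (U ∩ Wp).card = 0 := by omega
    have hUWm : U ∩ Wm = ∅ := Finset.card_eq_zero.mp hb0
    have hUWp : U ∩ Wp = ∅ := Finset.card_eq_zero.mp hc0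
    -- |Wp ∪ Wm| ≤ n - |U| = |W|
    have hdisjU : Disjoint U (Wp ∪ Wm) := by
      rw [Finset.disjoint_union_right]
      constructor <;> rw [Finset.disjoint_iff_inter_eq_empty] <;> assumption
    have hWpWm_card : (Wp ∪ Wm).card ≤ W.card := by
      have : U.card + (Wp ∪ Wm).card ≤ n := by
        rw [← Finset.card_union_of_disjoint hdisjU]
        simpa using Finset.card_le_univ (U ∪ (Wp ∪ Wm))
      omega
    have hinter : Wp.card ≤ (Wp ∩ Wm).card := by
      have := Finset.card_inter_add_card_union Wp Wm
      omega
    have hWpWm : Wp = Wm := by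
      have h1 : Wp ∩ Wm = Wp := by
        apply Finset.eq_of_subset_of_card_le Finset.inter_subset_left
        · exact hinter
      have h2 : Wp ⊆ Wm := by rw [← h1]; exact Finset.inter_subset_right
      exact Finset.eq_of_subset_of_card_le h2 (by omega)
    have hcl : ∀ w : Fin n, w ∈ W ↔ w + 2 ∈ W := by
      intro w
      constructor
      · intro hw
        have h1 : w + 1 ∈ Wp := Finset.mem_image_of_mem _ hw
        rw [hWpWm] at h1
        obtain ⟨x, hx, hxe⟩ := Finset.mem_image.mp h1
        have : x = w + 2 := by
          have : x = w + 1 + 1 := by rw [← hxe]; ring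
          rw [this]; ring
        rwa [← this]
      · intro hw
        have h1 : w + 1 ∈ Wm := by
          apply Finset.mem_image.mpr
          exact ⟨w + 2, hw, by ring⟩
        rw [← hWpWm] at h1
        obtain ⟨x, hx, hxe⟩ := Finset.mem_image.mp h1
        have : x = w := by
          have := add_left_injective 1 hxe
          simpa using this
        rwa [← this]
    obtain ⟨p, hp⟩ := Finset.card_eq_one.mp ha1
    have hpU : p ∈ U := (Finset.mem_inter.mp (hp ▸ Finset.mem_singleton_self p)).1
    have hpW : p ∈ W := (Finset.mem_inter.mp (hp ▸ Finset.mem_singleton_self p)).2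
    have key : ∀ t : ℕ, p + ((2*t : ℕ) : Fin n) ∈ W := by
      intro t
      induction t with
      | zero => simpa using hpW
      | succ t ih =>
          have he : p + ((2*(t+1) : ℕ) : Fin n) = (p + ((2*t : ℕ) : Fin n)) + 2 := by
            push_cast
            ring
          rw [he]
          exact (hcl _).mp ih
    have hUp : ∀ u ∈ U, u = p := by
      intro u hu
      rcases fin_doubling (u - p) with ⟨t, ht | ht⟩
      · have hueq : u = p + ((2*t : ℕ) : Fin n) := by
          rw [← ht]; ring
        have : u ∈ U ∩ W := Finset.mem_inter.mpr ⟨hu, hueq ▸ key t⟩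
        rw [hp] at this
        exact Finset.mem_singleton.mp this
      · exfalso
        have hueq : u = (p + ((2*t : ℕ) : Fin n)) + 1 := by
          have h2 : u - p = ((2*t : ℕ) : Fin n) + 1 := by
            rw [ht]; push_cast; ring
          rw [← sub_add_cancel u p, h2]; ring
        have : u ∈ Wp := Finset.mem_image.mpr ⟨p + ((2*t : ℕ) : Fin n), key t, hueq.symm⟩
        have : u ∈ U ∩ Wp := Finset.mem_inter.mpr ⟨hu, this⟩
        rw [hUWp] at this
        exact absurd this (Finset.notMem_empty u)
    have hUcard : U.card = 1 := by
      rw [Finset.eq_singleton_iff_unique_mem.mpr ⟨hpU, hUp⟩]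
      exact Finset.card_singleton p
    have hWcard : W.card = n - 1 := by omega
    have hWccard : (univ \ W).card = 1 := by
      rw [Finset.card_sdiff_of_subset (Finset.subset_univ _)]
      simp only [Finset.card_univ, Fintype.card_fin]
      omega
    obtain ⟨q, hq⟩ := Finset.card_eq_one.mp hWccard
    have hqW : q ∉ W := by
      have : q ∈ univ \ W := hq ▸ Finset.mem_singleton_self q
      exact (Finset.mem_sdiff.mp this).2
    by_cases hq2 : q - 2 ∈ W
    · have : (q - 2) + 2 ∈ W := (hcl _).mp hq2
      rw [sub_add_cancel] at this
      exact hqW this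
    · have : q - 2 ∈ univ \ W := Finset.mem_sdiff.mpr ⟨Finset.mem_univ _, hq2⟩
      rw [hq] at this
      have h2 : q - 2 = q := Finset.mem_singleton.mp this
      rw [sub_eq_self] at h2
      exact fin_two_ne_zero hn h2

end Cyc2
section Graphs

open Finset SimpleGraph

lemma set_ncard_prod {α β : Type*} (s : Set α) (t : Set β) :
    (s ×ˢ t).ncard = s.ncard * t.ncard := by
  rw [← Nat.card_coe_set_eq, ← Nat.card_coe_set_eq, ← Nat.card_coe_set_eq,
    Nat.card_congr (Equiv.Set.prod s t), Nat.card_prod]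

variable {V : Type*} [Fintype V] (G : SimpleGraph V) {n : ℕ} [NeZero n]

lemma cyc_adj (hn : 3 ≤ n) {i j : Fin n} :
    (SimpleGraph.cycleGraph n).Adj i j ↔ j = i + 1 ∨ j = i - 1 := by
  rw [SimpleGraph.cycleGraph_adj']
  have h1 : ((1 : Fin n)).val = 1 := by
    rw [show ((1 : Fin n)).val = 1 % n from rfl]
    exact Nat.mod_eq_of_lt (by omega)
  constructor
  · rintro (h | h)
    · right
      have hij : i - j = 1 := Fin.ext (by rw [h1]; exact h)
      rw [← hij]; ring
    · left
      have hji : j - i = 1 := Fin.ext (by rw [h1]; exact h)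
      rw [← hji]; ring
  · rintro (rfl | rfl)
    · right
      have : i + 1 - i = 1 := by ring
      rw [this, h1]
    · left
      have : i - (i - 1) = 1 := by ring
      rw [this, h1]

lemma strongProd_adj {α β : Type*} (G : SimpleGraph α) (H : SimpleGraph β) (a b : α × β) :
    (strongProd G H).Adj a b ↔ (a.1 = b.1 ∧ H.Adj a.2 b.2) ∨ (a.2 = b.2 ∧ G.Adj a.1 b.1) ∨
      (G.Adj a.1 b.1 ∧ H.Adj a.2 b.2) := Iff.rfl

lemma strongProd_neighborSet (hn : 3 ≤ n) (x : V) (i : Fin n) :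
    (strongProd G (SimpleGraph.cycleGraph n)).neighborSet (x,i)
      = (((G.neighborSet x) ∪ {x}) ×ˢ ({i+1, i-1, i} : Set (Fin n))) \ {(x,i)} := by
  ext ⟨y, j⟩
  simp only [SimpleGraph.mem_neighborSet, Set.mem_diff, Set.mem_prod, Set.mem_union,
    Set.mem_singleton_iff, Set.mem_insert_iff, Prod.mk.injEq, strongProd_adj, cyc_adj hn]
  constructor
  · rintro (⟨hxy, hc⟩ | ⟨hij, ha⟩ | ⟨ha, hc⟩)
    · refine ⟨⟨Or.inr hxy.symm, by tauto⟩, ?_⟩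
      rintro ⟨rfl, rfl⟩
      rcases hc with h | h
      · exact fin_succ_ne hn _ h.symm
      · exact fin_pred_ne hn _ h.symm
    · refine ⟨⟨Or.inl ha, Or.inr (Or.inr hij.symm)⟩, ?_⟩
      rintro ⟨rfl, rfl⟩
      exact G.irrefl ha
    · refine ⟨⟨Or.inl ha, by tauto⟩, ?_⟩
      rintro ⟨rfl, rfl⟩
      exact G.irrefl ha
  · rintro ⟨⟨hy | rfl, hj⟩, hne⟩
    · rcases hj with rfl | rfl | rfl
      · exact Or.inr (Or.inr ⟨hy, Or.inl rfl⟩)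
      · exact Or.inr (Or.inr ⟨hy, Or.inr rfl⟩)
      · exact Or.inr (Or.inl ⟨rfl, hy⟩)
    · rcases hj with rfl | rfl | rfl
      · exact Or.inl ⟨rfl, Or.inl rfl⟩
      · exact Or.inl ⟨rfl, Or.inr rfl⟩
      · exact absurd ⟨rfl, rfl⟩ hne

lemma deg_strongProd (hn : 3 ≤ n) (p : V × Fin n) :
    deg (strongProd G (SimpleGraph.cycleGraph n)) p = 3 * deg G p.1 + 2 := by
  obtain ⟨x, i⟩ := p
  dsimp only
  rw [deg, strongProd_neighborSet G hn]
  have hT : ({i+1, i-1, i} : Set (Fin n)).ncard = 3 := by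
    rw [Set.ncard_insert_of_notMem (by
        simp only [Set.mem_insert_iff, Set.mem_singleton_iff]
        push_neg
        exact ⟨fin_succ_ne_pred hn i, fin_succ_ne hn i⟩) (Set.toFinite _),
      Set.ncard_pair (fin_pred_ne hn i)]
  have hA : ((G.neighborSet x) ∪ {x}).ncard = deg G x + 1 := by
    rw [Set.union_singleton, Set.ncard_insert_of_notMem (by simp) (Set.toFinite _), deg]
  have hmem : ((x : V), i) ∈ (((G.neighborSet x) ∪ {x}) ×ˢ ({i+1, i-1, i} : Set (Fin n))) := by
    refine Set.mem_prod.mpr ⟨Or.inr rfl, by simp⟩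
  rw [Set.ncard_diff_singleton_of_mem hmem, set_ncard_prod, hA, hT]
  omega

lemma exists_minDeg [Nonempty V] : ∃ v, deg G v = minDeg G := by
  have h : {d | ∃ v, d = deg G v}.Nonempty := ⟨deg G Classical.ofNonempty, ⟨_, rfl⟩⟩
  obtain ⟨v, hv⟩ := Nat.sInf_mem h
  exact ⟨v, hv.symm⟩

lemma minDeg_le (v : V) : minDeg G ≤ deg G v := Nat.sInf_le ⟨v, rfl⟩

lemma minEdgeDeg_strongProd [Nonempty V] (hn : 3 ≤ n) :
    minEdgeDeg (strongProd G (SimpleGraph.cycleGraph n)) = 6 * minDeg G + 2 := by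
  obtain ⟨x0, hx0⟩ := exists_minDeg G
  have hadj01 : (strongProd G (SimpleGraph.cycleGraph n)).Adj (x0, (0 : Fin n)) (x0, 1) := by
    rw [strongProd_adj]
    refine Or.inl ⟨rfl, ?_⟩
    rw [cyc_adj hn]
    exact Or.inl (zero_add 1).symm
  apply le_antisymm
  · apply Nat.sInf_le
    refine ⟨(x0, 0), (x0, 1), hadj01, ?_⟩
    rw [deg_strongProd G hn, deg_strongProd G hn]
    simp only
    omega
  · refine le_csInf ⟨_, ⟨(x0, 0), (x0, 1), hadj01, rfl⟩⟩ ?_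
    rintro d ⟨u, v, hadj, rfl⟩
    rw [deg_strongProd G hn, deg_strongProd G hn]
    have h1 := minDeg_le G u.1
    have h2 := minDeg_le G v.1
    omega

end Graphs
section Upper

open Finset SimpleGraph

variable {V : Type*} [Fintype V] (G : SimpleGraph V) {n : ℕ} [NeZero n]

lemma exists_G_neighbor (hG : G.Connected) (hm : 2 ≤ Fintype.card V) (y : V) :
    ∃ x', G.Adj y x' := by
  obtain ⟨z, hz⟩ := Fintype.exists_ne_of_one_lt_card (by omega) y
  obtain ⟨w⟩ := hG.preconnected y z
  cases w with
  | nil => exact absurd rfl hz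
  | cons h _ => exact ⟨_, h⟩

lemma deg_eq_ncard_incidenceSet (H : SimpleGraph (V × Fin n)) (w : V × Fin n) :
    (H.incidenceSet w).ncard = deg H w := by
  classical
  rw [deg, ← Nat.card_coe_set_eq, ← Nat.card_coe_set_eq]
  exact Nat.card_congr (H.incidenceSetEquivNeighborSet w)

lemma restCut_exists (hn : 3 ≤ n) (hG : G.Connected) (hm : 2 ≤ Fintype.card V) :
    ∃ S : Set (Sym2 (V × Fin n)),
      IsRestrictedEdgeCut (strongProd G (SimpleGraph.cycleGraph n)) S ∧
      S.ncard = 6 * minDeg G + 2 := by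
  classical
  have : Nonempty V := Fintype.card_pos_iff.mp (by omega)
  set P := strongProd G (SimpleGraph.cycleGraph n) with hP
  obtain ⟨x0, hx0⟩ := exists_minDeg G
  set u : V × Fin n := (x0, (0 : Fin n)) with hu
  set v : V × Fin n := (x0, (1 : Fin n)) with hv
  have h10 : (1 : Fin n) ≠ 0 := fin_one_ne_zero hn
  have huv : P.Adj u v := by
    rw [hP, strongProd_adj]
    refine Or.inl ⟨rfl, ?_⟩
    rw [cyc_adj hn]
    exact Or.inl (zero_add 1).symm
  have hune : u ≠ v := by
    intro h
    exact h10 (congrArg Prod.snd h).symm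
  set S : Set (Sym2 (V × Fin n)) := (P.incidenceSet u ∪ P.incidenceSet v) \ {s(u,v)} with hS
  have hSsub : S ⊆ P.edgeSet := fun e he => by
    rcases (Set.mem_diff _).mp he with ⟨he1, _⟩
    rcases he1 with h | h
    · exact P.incidenceSet_subset u h
    · exact P.incidenceSet_subset v h
  have huvS : s(u,v) ∉ S := fun h => ((Set.mem_diff _).mp h).2 rfl
  -- cardinality
  have hinter : P.incidenceSet u ∩ P.incidenceSet v = {s(u,v)} :=
    P.incidenceSet_inter_incidenceSet_of_adj huv
  have hcard : S.ncard = 6 * minDeg G + 2 := by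
    have h1 : (P.incidenceSet u).ncard = 3 * minDeg G + 2 := by
      rw [deg_eq_ncard_incidenceSet, hP, deg_strongProd G hn, hu]
      simp only
      omega
    have h2 : (P.incidenceSet v).ncard = 3 * minDeg G + 2 := by
      rw [deg_eq_ncard_incidenceSet, hP, deg_strongProd G hn, hv]
      simp only
      omega
    have h3 := Set.ncard_union_add_ncard_inter (P.incidenceSet u) (P.incidenceSet v)
      (Set.toFinite _) (Set.toFinite _)
    rw [hinter, Set.ncard_singleton] at h3
    have hmem : s(u,v) ∈ P.incidenceSet u ∪ P.incidenceSet v :=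
      Or.inl ⟨P.mem_edgeSet.mpr huv, by simp⟩
    have h4 : S.ncard = (P.incidenceSet u ∪ P.incidenceSet v).ncard - 1 := by
      rw [hS, Set.ncard_diff_singleton_of_mem hmem]
    omega
  -- the walk invariant
  have hstay : ∀ a b : V × Fin n, a ∈ ({u, v} : Set (V × Fin n)) →
      (P.deleteEdges S).Adj a b → b ∈ ({u, v} : Set (V × Fin n)) := by
    intro a b ha hab
    rw [SimpleGraph.deleteEdges_adj] at hab
    obtain ⟨hadj, hnS⟩ := hab
    have hmem : s(a,b) ∈ P.incidenceSet u ∪ P.incidenceSet v := by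
      rcases ha with rfl | rfl
      · exact Or.inl ⟨P.mem_edgeSet.mpr hadj, by simp⟩
      · exact Or.inr ⟨P.mem_edgeSet.mpr hadj, by simp⟩
    have : s(a,b) = s(u,v) := by
      by_contra hne
      exact hnS ((Set.mem_diff _).mpr ⟨hmem, hne⟩)
    rcases Sym2.eq_iff.mp this with ⟨_, rfl⟩ | ⟨_, rfl⟩
    · exact Or.inr rfl
    · exact Or.inl rfl
  have hwalk : ∀ (a b : V × Fin n) (w : (P.deleteEdges S).Walk a b),
      a ∈ ({u, v} : Set (V × Fin n)) → b ∈ ({u, v} : Set (V × Fin n)) := by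
    intro a b w
    induction w with
    | nil => exact id
    | cons h p ih => exact fun ha => ih (hstay _ _ ha h)
  have hnotconn : ¬ (P.deleteEdges S).Connected := by
    intro hc
    obtain ⟨w⟩ := hc.preconnected u (x0, (2 : Fin n))
    have := hwalk _ _ w (Or.inl rfl)
    rcases this with h | h
    · exact fin_two_ne_zero hn (congrArg Prod.snd h)
    · have h21 : (2 : Fin n) = 1 := congrArg Prod.snd h
      apply fin_one_ne_zero hn
      rw [← one_add_one_eq_two] at h21
      exact add_eq_left.mp h21
  -- every vertex has a neighbor in P - S
  have hnb : ∀ w : V × Fin n, ∃ w', w' ≠ w ∧ (P.deleteEdges S).Adj w w' := by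
    intro w
    by_cases hwu : w = u
    · refine ⟨v, fun h => hune (hwu ▸ h.symm), ?_⟩
      rw [SimpleGraph.deleteEdges_adj]
      exact ⟨hwu ▸ huv, hwu ▸ huvS⟩
    by_cases hwv : w = v
    · refine ⟨u, fun h => hune (hwv ▸ h), ?_⟩
      rw [SimpleGraph.deleteEdges_adj]
      constructor
      · exact hwv ▸ huv.symm
      · rw [hwv, Sym2.eq_swap]
        exact huvS
    -- w ∉ {u, v}
    obtain ⟨y, j⟩ := w
    have hcand : ∃ c : V × Fin n, c ∉ ({u, v} : Set (V × Fin n)) ∧ P.Adj (y, j) c := by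
      by_cases hyx : y = x0
      · obtain ⟨x', hx'⟩ := exists_G_neighbor G hG hm y
        have hxx0 : x' ≠ x0 := by
          rw [← hyx]
          exact hx'.ne'
        refine ⟨(x', j), ?_, ?_⟩
        · intro hc
          rw [Set.mem_insert_iff, Set.mem_singleton_iff] at hc
          rcases hc with h | h
          · exact hxx0 (congrArg Prod.fst h)
          · exact hxx0 (congrArg Prod.fst h)
        · rw [strongProd_adj]
          exact Or.inr (Or.inl ⟨rfl, hx'⟩)
      · refine ⟨(y, j + 1), ?_, ?_⟩
        · intro hc
          rw [Set.mem_insert_iff, Set.mem_singleton_iff] at hc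
          rcases hc with h | h
          · exact hyx (congrArg Prod.fst h)
          · exact hyx (congrArg Prod.fst h)
        · rw [strongProd_adj]
          refine Or.inl ⟨rfl, ?_⟩
          rw [cyc_adj hn]
          exact Or.inl rfl
    obtain ⟨c, hcuv, hcadj⟩ := hcand
    have hwuv : (y, j) ∉ ({u, v} : Set (V × Fin n)) := by
      intro hc
      rw [Set.mem_insert_iff, Set.mem_singleton_iff] at hc
      rcases hc with h | h
      · exact hwu h
      · exact hwv h
    refine ⟨c, fun h => P.irrefl (h ▸ hcadj), ?_⟩
    rw [SimpleGraph.deleteEdges_adj]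
    refine ⟨hcadj, ?_⟩
    intro hmem
    rcases ((Set.mem_diff _).mp hmem).1 with h | h
    · rcases Sym2.mem_iff.mp h.2 with h' | h'
      · exact hwuv (Set.mem_insert_iff.mpr (Or.inl h'.symm))
      · exact hcuv (Set.mem_insert_iff.mpr (Or.inl h'.symm))
    · rcases Sym2.mem_iff.mp h.2 with h' | h'
      · exact hwuv (Set.mem_insert_iff.mpr (Or.inr (Set.mem_singleton_iff.mpr h'.symm)))
      · exact hcuv (Set.mem_insert_iff.mpr (Or.inr (Set.mem_singleton_iff.mpr h'.symm)))
  refine ⟨S, ⟨hSsub, hnotconn, ?_⟩, hcard⟩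
  intro w
  obtain ⟨w', hne, hadj⟩ := hnb w
  have hsub : {w, w'} ⊆ ((P.deleteEdges S).connectedComponentMk w).supp := by
    intro z hz
    rcases hz with rfl | rfl
    · rfl
    · exact SimpleGraph.ConnectedComponent.sound hadj.symm.reachable
  calc (2 : ℕ) = ({w, w'} : Set (V × Fin n)).ncard := (Set.ncard_pair (Ne.symm hne)).symm
    _ ≤ _ := Set.ncard_le_ncard hsub (Set.toFinite _)

lemma edgeConn_le_boundary (A : Set V) (hA : A.Nonempty) (hA' : ∃ z, z ∉ A) :
    edgeConn G ≤ ((univ : Finset (V × V)).filter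
      (fun q => G.Adj q.1 q.2 ∧ q.1 ∈ A ∧ q.2 ∉ A)).card := by
  classical
  set B := (univ : Finset (V × V)).filter (fun q => G.Adj q.1 q.2 ∧ q.1 ∈ A ∧ q.2 ∉ A) with hB
  set S0 : Finset (Sym2 V) := B.image (fun q => s(q.1, q.2)) with hS0
  have hmemB : ∀ q ∈ B, G.Adj q.1 q.2 ∧ q.1 ∈ A ∧ q.2 ∉ A := by
    intro q hq
    exact (Finset.mem_filter.mp hq).2
  have hinj : Set.InjOn (fun q : V × V => s(q.1, q.2)) B := by
    intro q hq q' hq' he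
    obtain ⟨_, hq1, hq2⟩ := hmemB q (by exact_mod_cast hq)
    obtain ⟨_, hq1', hq2'⟩ := hmemB q' (by exact_mod_cast hq')
    rcases Sym2.eq_iff.mp he with ⟨h1, h2⟩ | ⟨h1, h2⟩
    · exact Prod.ext h1 h2
    · exact absurd (h1 ▸ hq1) hq2'
  apply Nat.sInf_le
  refine ⟨(S0 : Set (Sym2 V)), ?_, ?_, ?_⟩
  · intro e he
    obtain ⟨q, hq, rfl⟩ := Finset.mem_image.mp (by exact_mod_cast he)
    exact G.mem_edgeSet.mpr (hmemB q hq).1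
  · rw [Set.ncard_coe_finset, hS0, Finset.card_image_of_injOn hinj]
  · intro hc
    obtain ⟨a, ha⟩ := hA
    obtain ⟨z, hz⟩ := hA'
    have hstay : ∀ p q : V, p ∈ A → (G.deleteEdges (S0 : Set (Sym2 V))).Adj p q → q ∈ A := by
      intro p q hp hpq
      rw [SimpleGraph.deleteEdges_adj] at hpq
      obtain ⟨hadj, hnS⟩ := hpq
      by_contra hq
      apply hnS
      apply Finset.mem_coe.mpr
      apply Finset.mem_image.mpr
      exact ⟨(p, q), Finset.mem_filter.mpr ⟨Finset.mem_univ _, hadj, hp, hq⟩, rfl⟩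
    have hwalk : ∀ (p q : V) (w : (G.deleteEdges (S0 : Set (Sym2 V))).Walk p q),
        p ∈ A → q ∈ A := by
      intro p q w
      induction w with
      | nil => exact id
      | cons h p ih => exact fun hp => ih (hstay _ _ hp h)
    obtain ⟨w⟩ := hc.preconnected a z
    exact hz (hwalk _ _ w ha)

end Upper
section Lower

open Finset SimpleGraph

variable {V : Type*} [Fintype V] {n : ℕ} [NeZero n]

/-- ordered boundary pairs of `X` in the strong product. -/
noncomputable def DD (G : SimpleGraph V) (n : ℕ) [NeZero n] (X : Set (V × Fin n)) :
    Finset ((V × Fin n) × (V × Fin n)) :=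
  (univ : Finset _).filter
    (fun p => (strongProd G (SimpleGraph.cycleGraph n)).Adj p.1 p.2 ∧ p.1 ∈ X ∧ p.2 ∉ X)

noncomputable def Xz (X : Set (V × Fin n)) (z : V) : Finset (Fin n) :=
  univ.filter (fun i => (z,i) ∈ X)

noncomputable def Bz (X : Set (V × Fin n)) (z : V) : Finset (Fin n) :=
  univ.filter (fun i => (z,i) ∉ X)

lemma mem_DD {G : SimpleGraph V} {X : Set (V × Fin n)} {p} :
    p ∈ DD G n X ↔ (strongProd G (SimpleGraph.cycleGraph n)).Adj p.1 p.2 ∧ p.1 ∈ X ∧ p.2 ∉ X := by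
  rw [DD, Finset.mem_filter]
  simp

lemma Xz_Bz_card (X : Set (V × Fin n)) (z : V) : (Xz X z).card + (Bz X z).card = n := by
  have := Finset.card_filter_add_card_filter_not (s := (univ : Finset (Fin n)))
    (p := fun i => (z,i) ∈ X)
  simpa [Xz, Bz] using this

lemma Bz_empty_iff {X : Set (V × Fin n)} {z : V} : Bz X z = ∅ ↔ Xz X z = univ := by
  constructor
  · intro h
    apply Finset.eq_univ_of_forall
    intro i
    by_contra hi
    have : i ∈ Bz X z := by
      simp only [Bz, Finset.mem_filter, Finset.mem_univ, true_and]
      intro hX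
      exact hi (by simp [Xz, hX])
    rw [h] at this
    exact absurd this (Finset.notMem_empty i)
  · intro h
    rw [Finset.eq_empty_iff_forall_notMem]
    intro i hi
    have h1 : i ∈ Xz X z := h ▸ Finset.mem_univ i
    rw [Xz, Finset.mem_filter] at h1
    rw [Bz, Finset.mem_filter] at hi
    exact hi.2 h1.2

lemma mem_Xz {X : Set (V × Fin n)} {z : V} {i : Fin n} : i ∈ Xz X z ↔ (z,i) ∈ X := by
  simp [Xz]

lemma mem_Bz {X : Set (V × Fin n)} {z : V} {i : Fin n} : i ∈ Bz X z ↔ (z,i) ∉ X := by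
  simp [Bz]

lemma DD_compl_card (G : SimpleGraph V) (X : Set (V × Fin n)) :
    (DD G n Xᶜ).card = (DD G n X).card := by
  apply Finset.card_bij' (fun p _ => Prod.swap p) (fun p _ => Prod.swap p)
  · intro p hp
    rw [mem_DD] at hp ⊢
    obtain ⟨hadj, h1, h2⟩ := hp
    exact ⟨hadj.symm, by simpa using h2, by simpa using h1⟩
  · intro p hp
    rw [mem_DD] at hp ⊢
    obtain ⟨hadj, h1, h2⟩ := hp
    refine ⟨hadj.symm, ?_, ?_⟩
    · simpa using h2
    · simpa using h1
  · intro p _; exact Prod.swap_swap p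
  · intro p _; exact Prod.swap_swap p

lemma card_DD_le_ncard (G : SimpleGraph V) (X : Set (V × Fin n)) {S : Set (Sym2 (V × Fin n))}
    (hX : ∀ a b, (strongProd G (SimpleGraph.cycleGraph n)).Adj a b → s(a,b) ∉ S →
      (a ∈ X ↔ b ∈ X)) :
    (DD G n X).card ≤ S.ncard := by
  classical
  rw [Set.ncard_eq_toFinset_card' S]
  apply Finset.card_le_card_of_injOn (fun p => s(p.1, p.2))
  · intro p hp
    rw [Finset.mem_coe, mem_DD] at hp
    obtain ⟨hadj, h1, h2⟩ := hp
    rw [Finset.mem_coe, Set.mem_toFinset]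
    by_contra hS
    exact h2 ((hX _ _ hadj hS).mp h1)
  · intro p hp q hq he
    rw [Finset.mem_coe, mem_DD] at hp hq
    rcases Sym2.eq_iff.mp he with ⟨h1, h2⟩ | ⟨h1, h2⟩
    · exact Prod.ext h1 h2
    · exact absurd (h1 ▸ hp.2.1) hq.2.2

/-- the fiber of `DD` over an ordered pair of `G`-vertices -/
noncomputable def fib (G : SimpleGraph V) (n : ℕ) [NeZero n] (X : Set (V × Fin n)) (q : V × V) :
    Finset ((V × Fin n) × (V × Fin n)) :=
  (DD G n X).filter (fun p => (p.1.1, p.2.1) = q)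

lemma sum_fib_le_DD (G : SimpleGraph V) (X : Set (V × Fin n)) (Q : Finset (V × V)) :
    ∑ q ∈ Q, (fib G n X q).card ≤ (DD G n X).card := by
  classical
  have h1 : ∑ q ∈ Q, (fib G n X q).card
      = ∑ q ∈ Q, ((DD G n X).filter (fun p => (p.1.1, p.2.1) = q)).card := rfl
  rw [h1]
  have h2 := Finset.card_eq_sum_card_fiberwise
    (f := fun p : (V × Fin n) × (V × Fin n) => (p.1.1, p.2.1)) (s := DD G n X)
    (t := univ) (fun x _ => Finset.mem_univ _)
  rw [h2]
  exact Finset.sum_le_sum_of_subset (Finset.subset_univ Q)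

lemma fib_lower (hn : 3 ≤ n) (G : SimpleGraph V) (X : Set (V × Fin n)) {z z' : V}
    (hzz : G.Adj z z') :
    3 * ((Xz X z).card - (Xz X z').card) ≤ (fib G n X (z, z')).card := by
  classical
  set P := strongProd G (SimpleGraph.cycleGraph n) with hP
  -- three injections
  set F0 := (Xz X z).filter (fun i => (z', i) ∉ X) with hF0
  set F1 := (Xz X z).filter (fun i => (z', i+1) ∉ X) with hF1
  set F2 := (Xz X z).filter (fun i => (z', i-1) ∉ X) with hF2
  have key : ∀ (F : Finset (Fin n)) (g : Fin n → Fin n), Function.Injective g →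
      F = (Xz X z).filter (fun i => (z', g i) ∉ X) →
      (Xz X z).card ≤ F.card + (Xz X z').card := by
    intro F g hg hF
    have hsplit := Finset.card_filter_add_card_filter_not (s := Xz X z)
      (p := fun i => (z', g i) ∉ X)
    rw [← hF] at hsplit
    have hle : ((Xz X z).filter (fun i => ¬ ((z', g i) ∉ X))).card ≤ (Xz X z').card := by
      apply Finset.card_le_card_of_injOn g
      · intro i hi
        rw [Finset.mem_coe, Finset.mem_filter] at hi
        rw [Finset.mem_coe, mem_Xz]
        exact not_not.mp hi.2
      · exact fun a _ b _ h => hg h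
    omega
  have k0 := key F0 id (fun a b h => h) hF0
  have k1 := key F1 (· + 1) (add_left_injective 1) hF1
  have k2 := key F2 (· - 1) sub_left_injective hF2
  -- map into fib
  set g0 : Fin n → _ := fun i => (((z, i) : V × Fin n), ((z', i) : V × Fin n)) with hg0
  set g1 : Fin n → _ := fun i => (((z, i) : V × Fin n), ((z', i+1) : V × Fin n)) with hg1
  set g2 : Fin n → _ := fun i => (((z, i) : V × Fin n), ((z', i-1) : V × Fin n)) with hg2
  have hadj0 : ∀ i : Fin n, P.Adj (z, i) (z', i) := fun i =>
    Or.inr (Or.inl ⟨rfl, hzz⟩)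
  have hadj1 : ∀ i : Fin n, P.Adj (z, i) (z', i+1) := fun i =>
    Or.inr (Or.inr ⟨hzz, (cyc_adj hn).mpr (Or.inl rfl)⟩)
  have hadj2 : ∀ i : Fin n, P.Adj (z, i) (z', i-1) := fun i =>
    Or.inr (Or.inr ⟨hzz, (cyc_adj hn).mpr (Or.inr rfl)⟩)
  have hmaps : ∀ (F : Finset (Fin n)) (g : Fin n → Fin n)
      (gg : Fin n → (V × Fin n) × (V × Fin n)),
      F = (Xz X z).filter (fun i => (z', g i) ∉ X) →
      gg = (fun i => (((z, i) : V × Fin n), ((z', g i) : V × Fin n))) →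
      (∀ i, P.Adj (z, i) (z', g i)) →
      ∀ i ∈ F, gg i ∈ fib G n X (z, z') := by
    intro F g gg hF hgg hadj i hi
    rw [hF, Finset.mem_filter, mem_Xz] at hi
    rw [fib, Finset.mem_filter, mem_DD, hgg]
    exact ⟨⟨hadj i, hi.1, hi.2⟩, rfl⟩
  have hm0 := hmaps F0 id g0 hF0 rfl hadj0
  have hm1 := hmaps F1 (· + 1) g1 hF1 rfl hadj1
  have hm2 := hmaps F2 (· - 1) g2 hF2 rfl hadj2
  have hinj0 : Set.InjOn g0 F0 := fun a _ b _ h => congrArg (Prod.snd ∘ Prod.fst) h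
  have hinj1 : Set.InjOn g1 F1 := fun a _ b _ h => congrArg (Prod.snd ∘ Prod.fst) h
  have hinj2 : Set.InjOn g2 F2 := fun a _ b _ h => congrArg (Prod.snd ∘ Prod.fst) h
  have himg : (F0.image g0) ∪ (F1.image g1) ∪ (F2.image g2) ⊆ fib G n X (z, z') := by
    intro p hp
    rcases Finset.mem_union.mp hp with hp | hp
    · rcases Finset.mem_union.mp hp with hp | hp
      · obtain ⟨i, hi, rfl⟩ := Finset.mem_image.mp hp
        exact hm0 i hi
      · obtain ⟨i, hi, rfl⟩ := Finset.mem_image.mp hp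
        exact hm1 i hi
    · obtain ⟨i, hi, rfl⟩ := Finset.mem_image.mp hp
      exact hm2 i hi
  have hd01 : Disjoint (F0.image g0) (F1.image g1) := by
    rw [Finset.disjoint_left]
    rintro p hp hq
    obtain ⟨i, _, rfl⟩ := Finset.mem_image.mp hp
    obtain ⟨i', _, he⟩ := Finset.mem_image.mp hq
    have e1 : i' = i := congrArg (Prod.snd ∘ Prod.fst) he
    have e2 : i' + 1 = i := congrArg (Prod.snd ∘ Prod.snd) he
    rw [e1] at e2
    exact fin_succ_ne hn i e2
  have hd012 : Disjoint ((F0.image g0) ∪ (F1.image g1)) (F2.image g2) := by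
    rw [Finset.disjoint_union_left]
    constructor
    · rw [Finset.disjoint_left]
      rintro p hp hq
      obtain ⟨i, _, rfl⟩ := Finset.mem_image.mp hp
      obtain ⟨i', _, he⟩ := Finset.mem_image.mp hq
      have e1 : i' = i := congrArg (Prod.snd ∘ Prod.fst) he
      have e2 : i' - 1 = i := congrArg (Prod.snd ∘ Prod.snd) he
      rw [e1] at e2
      exact fin_pred_ne hn i e2
    · rw [Finset.disjoint_left]
      rintro p hp hq
      obtain ⟨i, _, rfl⟩ := Finset.mem_image.mp hp
      obtain ⟨i', _, he⟩ := Finset.mem_image.mp hq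
      have e1 : i' = i := congrArg (Prod.snd ∘ Prod.fst) he
      have e2 : i' - 1 = i + 1 := congrArg (Prod.snd ∘ Prod.snd) he
      rw [e1] at e2
      exact fin_succ_ne_pred hn i e2.symm
  have hcard : F0.card + F1.card + F2.card ≤ (fib G n X (z, z')).card := by
    have h1 : ((F0.image g0) ∪ (F1.image g1) ∪ (F2.image g2)).card
        = F0.card + F1.card + F2.card := by
      rw [Finset.card_union_of_disjoint hd012, Finset.card_union_of_disjoint hd01,
        Finset.card_image_of_injOn hinj0, Finset.card_image_of_injOn hinj1,
        Finset.card_image_of_injOn hinj2]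
    rw [← h1]
    exact Finset.card_le_card himg
  omega

lemma filter_inst_irrel {α : Type*} (s : Finset α) (p : α → Prop)
    (h1 h2 : DecidablePred p) : @Finset.filter α p h1 s = @Finset.filter α p h2 s := by
  rw [Subsingleton.elim h1 h2]

lemma Xz_card_le (X : Set (V × Fin n)) (z : V) : (Xz X z).card ≤ n := by
  simpa using Finset.card_le_univ (Xz X z)

lemma caseI (hn : 3 ≤ n) (G : SimpleGraph V) (X : Set (V × Fin n))
    (hA : ∃ a, Bz X a = ∅) (hC : ∃ c, Xz X c = ∅) :
    3 * n * edgeConn G ≤ (DD G n X).card := by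
  classical
  obtain ⟨a, ha⟩ := hA
  obtain ⟨c, hc⟩ := hC
  set x : V → ℕ := fun z => (Xz X z).card with hx
  set AP : Finset (V × V) := univ.filter (fun q : V × V => G.Adj q.1 q.2) with hAP
  set Aset : ℕ → Set V := fun t => {z : V | t ≤ x z} with hAset
  set Bt : ℕ → Finset (V × V) := fun t => univ.filter
    (fun q : V × V => G.Adj q.1 q.2 ∧ q.1 ∈ Aset t ∧ q.2 ∉ Aset t) with hBt
  have hxa : x a = n := by
    have h1 := Xz_Bz_card X a
    rw [ha] at h1
    simp only [Finset.card_empty, add_zero] at h1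
    exact h1
  have hxc : x c = 0 := by simp [hx, hc]
  have hlevel : ∀ t ∈ Finset.Icc 1 n, edgeConn G ≤ (Bt t).card := by
    intro t ht
    rw [Finset.mem_Icc] at ht
    have h := edgeConn_le_boundary G (Aset t)
      ⟨a, by simp only [hAset, Set.mem_setOf_eq, hxa]; omega⟩
      ⟨c, by simp only [hAset, Set.mem_setOf_eq, hxc]; omega⟩
    simp only [hBt]
    convert h using 2
    exact filter_inst_irrel _ _ _ _
  set T2 : Finset (ℕ × (V × V)) := ((Finset.Icc 1 n) ×ˢ AP).filter
    (fun r => r.2.1 ∈ Aset r.1 ∧ r.2.2 ∉ Aset r.1) with hT2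
  have step1 : n * edgeConn G ≤ ∑ t ∈ Finset.Icc 1 n, (Bt t).card := by
    have h := Finset.card_nsmul_le_sum (Finset.Icc 1 n)
      (fun t => (Bt t).card) (edgeConn G) hlevel
    rw [smul_eq_mul] at h
    have hcard : (Finset.Icc 1 n).card = n := by
      rw [Nat.card_Icc]
      omega
    rw [hcard] at h
    exact h
  have step2 : ∑ t ∈ Finset.Icc 1 n, (Bt t).card = T2.card := by
    rw [Finset.card_eq_sum_card_fiberwise (f := fun r : ℕ × (V × V) => r.1) (s := T2)
      (t := Finset.Icc 1 n) (by
        intro r hr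
        rw [hT2, Finset.mem_coe, Finset.mem_filter, Finset.mem_product] at hr
        exact hr.1.1)]
    apply Finset.sum_congr rfl
    intro t ht
    apply Finset.card_bij' (fun q _ => ((t : ℕ), q)) (fun r _ => r.2)
    · intro q hq
      rw [hBt, Finset.mem_filter] at hq
      obtain ⟨_, hadj, h1, h2⟩ := hq
      rw [Finset.mem_filter, hT2, Finset.mem_filter, Finset.mem_product]
      exact ⟨⟨⟨ht, by rw [hAP, Finset.mem_filter]; exact ⟨Finset.mem_univ _, hadj⟩⟩,
        h1, h2⟩, rfl⟩
    · intro r hr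
      rw [Finset.mem_filter, hT2, Finset.mem_filter, Finset.mem_product] at hr
      obtain ⟨⟨⟨_, hAPmem⟩, h1, h2⟩, _⟩ := hr
      rw [hBt, Finset.mem_filter]
      rw [hAP, Finset.mem_filter] at hAPmem
      exact ⟨Finset.mem_univ _, hAPmem.2, by rwa [‹r.1 = t›] at h1, by rwa [‹r.1 = t›] at h2⟩
    · intro q _; rfl
    · intro r hr
      rw [Finset.mem_filter] at hr
      symm
      rw [Prod.ext_iff]
      exact ⟨hr.2, rfl⟩
  have step3 : T2.card = ∑ q ∈ AP, (x q.1 - x q.2) := by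
    rw [Finset.card_eq_sum_card_fiberwise (f := fun r : ℕ × (V × V) => r.2) (s := T2)
      (t := AP) (by
        intro r hr
        rw [hT2, Finset.mem_coe, Finset.mem_filter, Finset.mem_product] at hr
        exact hr.1.2)]
    apply Finset.sum_congr rfl
    intro q hq
    have himg : T2.filter (fun r => r.2 = q)
        = (Finset.Ioc (x q.2) (x q.1)).image (fun t => ((t : ℕ), q)) := by
      ext r
      rw [Finset.mem_filter, hT2, Finset.mem_filter, Finset.mem_product, Finset.mem_image]
      constructor
      · rintro ⟨⟨⟨hIcc, _⟩, h1, h2⟩, hrq⟩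
        refine ⟨r.1, ?_, by symm; rw [Prod.ext_iff]; exact ⟨rfl, hrq⟩⟩
        rw [Finset.mem_Ioc]
        rw [hAset, Set.mem_setOf_eq] at h1 h2
        rw [hrq] at h1 h2
        omega
      · rintro ⟨t, hIoc, rfl⟩
        rw [Finset.mem_Ioc] at hIoc
        have hle : x q.1 ≤ n := Xz_card_le X q.1
        dsimp only
        refine ⟨⟨⟨?_, hq⟩, ?_, ?_⟩, rfl⟩
        · rw [Finset.mem_Icc]
          omega
        · rw [hAset, Set.mem_setOf_eq]
          omega
        · rw [hAset, Set.mem_setOf_eq]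
          omega
    rw [himg, Finset.card_image_of_injective _ (fun s t h => congrArg Prod.fst h),
      Nat.card_Ioc]
  have step4 : ∑ q ∈ AP, 3 * (x q.1 - x q.2) ≤ (DD G n X).card := by
    calc ∑ q ∈ AP, 3 * (x q.1 - x q.2)
        ≤ ∑ q ∈ AP, (fib G n X q).card := by
          apply Finset.sum_le_sum
          intro q hq
          rw [hAP, Finset.mem_filter] at hq
          have := fib_lower hn G X hq.2
          simpa using this
      _ ≤ (DD G n X).card := sum_fib_le_DD G X AP
  calc 3 * n * edgeConn G = 3 * (n * edgeConn G) := by ring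
    _ ≤ 3 * ∑ t ∈ Finset.Icc 1 n, (Bt t).card := by omega
    _ = 3 * ∑ q ∈ AP, (x q.1 - x q.2) := by rw [step2, step3]
    _ = ∑ q ∈ AP, 3 * (x q.1 - x q.2) := by rw [Finset.mul_sum]
    _ ≤ (DD G n X).card := step4

end Lower
section CaseII

open Finset SimpleGraph

variable {V : Type*} [Fintype V] {n : ℕ} [NeZero n]

/-- within-fiber boundary pairs -/
noncomputable def Wfib (G : SimpleGraph V) (n : ℕ) [NeZero n] (X : Set (V × Fin n)) (z : V) :
    Finset ((V × Fin n) × (V × Fin n)) :=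
  (DD G n X).filter (fun p => p.1.1 = z ∧ p.2.1 = z)

/-- cross boundary pairs lying over a given edge -/
noncomputable def crossDe (G : SimpleGraph V) (n : ℕ) [NeZero n] (X : Set (V × Fin n))
    (e : Sym2 V) : Finset ((V × Fin n) × (V × Fin n)) :=
  (DD G n X).filter (fun p => ¬ p.1.1 = p.2.1 ∧ s(p.1.1, p.2.1) = e)

lemma sum_card_disjoint_le {β ι : Type*} (s : Finset ι) (f : ι → Finset β) (t : Finset β)
    (hsub : ∀ i ∈ s, f i ⊆ t)
    (hdisj : ∀ i ∈ s, ∀ j ∈ s, i ≠ j → Disjoint (f i) (f j)) :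
    ∑ i ∈ s, (f i).card ≤ t.card := by
  classical
  rw [← Finset.card_biUnion hdisj]
  apply Finset.card_le_card
  intro x hx
  obtain ⟨i, hi, hxi⟩ := Finset.mem_biUnion.mp hx
  exact hsub i hi hxi

lemma DD_split (G : SimpleGraph V) (X : Set (V × Fin n)) (sfin : Finset V)
    (E0 : Finset (Sym2 V)) :
    ∑ z ∈ sfin, (Wfib G n X z).card + ∑ e ∈ E0, (crossDe G n X e).card ≤ (DD G n X).card := by
  classical
  set Dwithin := (DD G n X).filter (fun p => p.1.1 = p.2.1) with hDw
  set Dcross := (DD G n X).filter (fun p => ¬ p.1.1 = p.2.1) with hDc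
  have h1 : Dwithin.card + Dcross.card = (DD G n X).card :=
    Finset.card_filter_add_card_filter_not _
  have h2 : ∑ z ∈ sfin, (Wfib G n X z).card ≤ Dwithin.card := by
    apply sum_card_disjoint_le
    · intro z _
      intro p hp
      rw [Wfib, Finset.mem_filter] at hp
      rw [hDw, Finset.mem_filter]
      exact ⟨hp.1, by rw [hp.2.1, hp.2.2]⟩
    · intro z _ z' _ hne
      rw [Finset.disjoint_left]
      intro p hp hp'
      rw [Wfib, Finset.mem_filter] at hp hp'
      exact hne (hp.2.1 ▸ hp'.2.1)
  have h3 : ∑ e ∈ E0, (crossDe G n X e).card ≤ Dcross.card := by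
    apply sum_card_disjoint_le
    · intro e _
      intro p hp
      rw [crossDe, Finset.mem_filter] at hp
      rw [hDc, Finset.mem_filter]
      exact ⟨hp.1, hp.2.1⟩
    · intro e _ e' _ hne
      rw [Finset.disjoint_left]
      intro p hp hp'
      rw [crossDe, Finset.mem_filter] at hp hp'
      exact hne (hp.2.2 ▸ hp'.2.2)
  omega

lemma Wfib_two (hn : 3 ≤ n) (G : SimpleGraph V) (X : Set (V × Fin n)) {z : V}
    (hXz : (Xz X z).Nonempty) (hBz : (Bz X z).Nonempty) :
    2 ≤ (Wfib G n X z).card := by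
  classical
  have hXne : Xz X z ≠ univ := by
    intro h
    obtain ⟨i, hi⟩ := hBz
    rw [mem_Bz] at hi
    exact hi (mem_Xz.mp (h ▸ Finset.mem_univ i))
  have ha : ∃ a ∈ Xz X z, a + 1 ∉ Xz X z := by
    by_contra hcon
    push_neg at hcon
    exact hXne (fin_closure_succ hXz hcon)
  have hb : ∃ b ∈ Xz X z, b - 1 ∉ Xz X z := by
    by_contra hcon
    push_neg at hcon
    exact hXne (fin_closure_pred hXz hcon)
  obtain ⟨a, haX, haB⟩ := ha
  obtain ⟨b, hbX, hbB⟩ := hb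
  set e1 : (V × Fin n) × (V × Fin n) := ((z, a), (z, a+1)) with he1
  set e2 : (V × Fin n) × (V × Fin n) := ((z, b), (z, b-1)) with he2
  have hm1 : e1 ∈ Wfib G n X z := by
    rw [Wfib, Finset.mem_filter, mem_DD]
    refine ⟨⟨Or.inl ⟨rfl, (cyc_adj hn).mpr (Or.inl rfl)⟩, mem_Xz.mp haX, fun h => haB (mem_Xz.mpr h)⟩, rfl, rfl⟩
  have hm2 : e2 ∈ Wfib G n X z := by
    rw [Wfib, Finset.mem_filter, mem_DD]
    refine ⟨⟨Or.inl ⟨rfl, (cyc_adj hn).mpr (Or.inr rfl)⟩, mem_Xz.mp hbX, fun h => hbB (mem_Xz.mpr h)⟩, rfl, rfl⟩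
  have hne : e1 ≠ e2 := by
    intro h
    have h1 : a = b := congrArg (Prod.snd ∘ Prod.fst) h
    have h2 : a + 1 = b - 1 := congrArg (Prod.snd ∘ Prod.snd) h
    rw [h1] at h2
    exact fin_succ_ne_pred hn b h2
  calc 2 = ({e1, e2} : Finset _).card := (Finset.card_pair hne).symm
    _ ≤ (Wfib G n X z).card := Finset.card_le_card (by
        intro p hp
        rcases Finset.mem_insert.mp hp with rfl | hp
        · exact hm1
        · rw [Finset.mem_singleton.mp hp]
          exact hm2)

lemma adj_cross (hn : 3 ≤ n) {G : SimpleGraph V} {z z' : V} (hadj : G.Adj z z')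
    {i j : Fin n} (h : j = i ∨ j = i + 1 ∨ j = i - 1) :
    (strongProd G (SimpleGraph.cycleGraph n)).Adj (z,i) (z',j) := by
  rcases h with rfl | rfl | rfl
  · exact Or.inr (Or.inl ⟨rfl, hadj⟩)
  · exact Or.inr (Or.inr ⟨hadj, (cyc_adj hn).mpr (Or.inl rfl)⟩)
  · exact Or.inr (Or.inr ⟨hadj, (cyc_adj hn).mpr (Or.inr rfl)⟩)

lemma crossDe_lower (hn : 3 ≤ n) (G : SimpleGraph V) (X : Set (V × Fin n)) {z z' : V}
    (hne : z ≠ z') (hadj : G.Adj z z') :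
    cnt (Xz X z) (Bz X z') + cnt (Xz X z') (Bz X z) ≤ (crossDe G n X (s(z,z'))).card := by
  classical
  set g1 : Fin n × Fin n → (V × Fin n) × (V × Fin n) := fun r => ((z, r.1), (z', r.2)) with hg1
  set g2 : Fin n × Fin n → (V × Fin n) × (V × Fin n) := fun r => ((z', r.1), (z, r.2)) with hg2
  have hm1 : ∀ r ∈ cntP (Xz X z) (Bz X z'), g1 r ∈ crossDe G n X (s(z,z')) := by
    rintro ⟨i, j⟩ hr
    rw [cntP, Finset.mem_filter, Finset.mem_product] at hr
    obtain ⟨⟨hi, hj⟩, hc⟩ := hr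
    rw [crossDe, Finset.mem_filter, mem_DD]
    exact ⟨⟨adj_cross hn hadj hc, mem_Xz.mp hi, mem_Bz.mp hj⟩, hne, rfl⟩
  have hm2 : ∀ r ∈ cntP (Xz X z') (Bz X z), g2 r ∈ crossDe G n X (s(z,z')) := by
    rintro ⟨i, j⟩ hr
    rw [cntP, Finset.mem_filter, Finset.mem_product] at hr
    obtain ⟨⟨hi, hj⟩, hc⟩ := hr
    rw [crossDe, Finset.mem_filter, mem_DD]
    exact ⟨⟨adj_cross hn hadj.symm hc, mem_Xz.mp hi, mem_Bz.mp hj⟩, Ne.symm hne, Sym2.eq_swap⟩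
  have hinj1 : Set.InjOn g1 (cntP (Xz X z) (Bz X z')) := by
    intro r _ r' _ h
    have h1 : r.1 = r'.1 := congrArg (Prod.snd ∘ Prod.fst) h
    have h2 : r.2 = r'.2 := congrArg (Prod.snd ∘ Prod.snd) h
    exact Prod.ext_iff.mpr ⟨h1, h2⟩
  have hinj2 : Set.InjOn g2 (cntP (Xz X z') (Bz X z)) := by
    intro r _ r' _ h
    have h1 : r.1 = r'.1 := congrArg (Prod.snd ∘ Prod.fst) h
    have h2 : r.2 = r'.2 := congrArg (Prod.snd ∘ Prod.snd) h
    exact Prod.ext_iff.mpr ⟨h1, h2⟩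
  have hdisj : Disjoint ((cntP (Xz X z) (Bz X z')).image g1)
      ((cntP (Xz X z') (Bz X z)).image g2) := by
    rw [Finset.disjoint_left]
    rintro p hp hq
    obtain ⟨r, _, rfl⟩ := Finset.mem_image.mp hp
    obtain ⟨r', _, he⟩ := Finset.mem_image.mp hq
    exact hne (congrArg (Prod.fst ∘ Prod.fst) he).symm
  have hsub : ((cntP (Xz X z) (Bz X z')).image g1) ∪ ((cntP (Xz X z') (Bz X z)).image g2)
      ⊆ crossDe G n X (s(z,z')) := by
    intro p hp
    rcases Finset.mem_union.mp hp with hp | hp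
    · obtain ⟨r, hr, rfl⟩ := Finset.mem_image.mp hp
      exact hm1 r hr
    · obtain ⟨r, hr, rfl⟩ := Finset.mem_image.mp hp
      exact hm2 r hr
  calc cnt (Xz X z) (Bz X z') + cnt (Xz X z') (Bz X z)
      = (((cntP (Xz X z) (Bz X z')).image g1) ∪ ((cntP (Xz X z') (Bz X z)).image g2)).card := by
        rw [Finset.card_union_of_disjoint hdisj, Finset.card_image_of_injOn hinj1,
          Finset.card_image_of_injOn hinj2]
        rfl
    _ ≤ _ := Finset.card_le_card hsub

/-- both fibers split: at least 4 cross pairs -/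
lemma crossDe_four (hn : 3 ≤ n) (G : SimpleGraph V) (X : Set (V × Fin n)) {z z' : V}
    (hadj : G.Adj z z') (hXz : (Xz X z).Nonempty) (hXz' : (Xz X z').Nonempty)
    (hBz : (Bz X z).Nonempty) (hBz' : (Bz X z').Nonempty) :
    4 ≤ (crossDe G n X (s(z,z'))).card := by
  have h1 := cnt_lower hn hXz hBz'
  have h2 := cnt_lower hn hXz' hBz
  have h3 := Xz_Bz_card X z
  have h4 := Xz_Bz_card X z'
  have h5 := crossDe_lower hn G X hadj.ne hadj
  omega

/-- neighbor fiber entirely in X: at least 3 * |B z| cross pairs -/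
lemma crossDe_three (hn : 3 ≤ n) (G : SimpleGraph V) (X : Set (V × Fin n)) {z z' : V}
    (hadj : G.Adj z z') (hBz' : Bz X z' = ∅) :
    3 * (Bz X z).card ≤ (crossDe G n X (s(z,z'))).card := by
  have h5 := crossDe_lower hn G X hadj.ne hadj
  have hXz' : Xz X z' = univ := Bz_empty_iff.mp hBz'
  have h6 : cnt (Xz X z') (Bz X z) = 3 * (Bz X z).card := by
    rw [hXz', cnt_univ_left hn]
  omega

lemma G_adj_of_prod_adj {G : SimpleGraph V} {z z' : V} {i j : Fin n}
    (h : (strongProd G (SimpleGraph.cycleGraph n)).Adj (z,i) (z',j)) (hne : z ≠ z') :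
    G.Adj z z' := by
  rcases h with ⟨h1, _⟩ | ⟨_, h2⟩ | ⟨h2, _⟩
  · exact absurd h1 hne
  · exact h2
  · exact h2

lemma deg_eq_card_neighborFinset (G : SimpleGraph V) [DecidableRel G.Adj] (z : V) :
    deg G z = (G.neighborFinset z).card := by
  rw [deg, SimpleGraph.neighborFinset, Set.ncard_eq_toFinset_card']

lemma caseII (hn : 3 ≤ n) (G : SimpleGraph V) (X : Set (V × Fin n))
    (hC : ∀ z, (Xz X z).Nonempty)
    (hYne : ∃ w : V × Fin n, w ∉ X)
    (hYnbr : ∀ w : V × Fin n, w ∉ X → ∃ w', w' ∉ X ∧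
      (strongProd G (SimpleGraph.cycleGraph n)).Adj w w')
    (hδ : 6 * minDeg G + 2 ≤ 2 * (Fintype.card V + 2 * numEdges G)) :
    6 * minDeg G + 2 ≤ (DD G n X).card := by
  classical
  set sfin : Finset V := univ.filter (fun z => (Bz X z).Nonempty) with hsfin
  have hmem_sfin : ∀ z, z ∈ sfin ↔ (Bz X z).Nonempty := by
    intro z
    rw [hsfin, Finset.mem_filter]
    simp
  have hsfin_ne : sfin.Nonempty := by
    obtain ⟨⟨z, i⟩, hw⟩ := hYne
    exact ⟨z, (hmem_sfin z).mpr ⟨i, mem_Bz.mpr hw⟩⟩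
  have hedge_card : numEdges G = G.edgeFinset.card := by
    rw [numEdges, Set.ncard_eq_toFinset_card']
    congr 1
  by_cases hsupp : sfin = univ
  · -- Case II.1 : every fiber is split
    have hsum1 : 2 * Fintype.card V ≤ ∑ z ∈ (univ : Finset V), (Wfib G n X z).card := by
      have h := Finset.card_nsmul_le_sum (univ : Finset V) (fun z => (Wfib G n X z).card) 2
        (fun z _ => Wfib_two hn G X (hC z) ((hmem_sfin z).mp (hsupp ▸ Finset.mem_univ z)))
      rw [smul_eq_mul] at h
      calc 2 * Fintype.card V = (univ : Finset V).card * 2 := by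
            rw [Finset.card_univ]; ring
        _ ≤ _ := h
    have hsum2 : 4 * G.edgeFinset.card ≤ ∑ e ∈ G.edgeFinset, (crossDe G n X e).card := by
      have h := Finset.card_nsmul_le_sum G.edgeFinset (fun e => (crossDe G n X e).card) 4
        (by
          intro e he
          revert he
          induction e using Sym2.ind with
          | _ z z' =>
            intro he
            rw [SimpleGraph.mem_edgeFinset, SimpleGraph.mem_edgeSet] at he
            exact crossDe_four hn G X he (hC z) (hC z')
              ((hmem_sfin z).mp (hsupp ▸ Finset.mem_univ z))
              ((hmem_sfin z').mp (hsupp ▸ Finset.mem_univ z')))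
      rw [smul_eq_mul] at h
      omega
    have hsplit := DD_split G X (univ : Finset V) G.edgeFinset
    rw [hedge_card] at hδ
    omega
  · -- Case II.2 : some fiber is entirely contained in X
    obtain ⟨y, hy, hymax⟩ := Finset.exists_max_image sfin (fun z => (Bz X z).card) hsfin_ne
    have hBy : (Bz X y).Nonempty := (hmem_sfin y).mp hy
    set kstar := (Bz X y).card with hkstar
    have hk1 : 1 ≤ kstar := Finset.card_pos.mpr hBy
    -- the `2 per split fiber` bound
    have hWlower : ∀ sf : Finset V, sf ⊆ sfin →
        2 * sf.card ≤ ∑ z ∈ sf, (Wfib G n X z).card := by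
      intro sf hsf
      have h := Finset.card_nsmul_le_sum sf (fun z => (Wfib G n X z).card) 2
        (fun z hz => Wfib_two hn G X (hC z) ((hmem_sfin z).mp (hsf hz)))
      rw [smul_eq_mul] at h
      omega
    rcases Nat.lt_or_ge kstar 2 with hklt | hkge
    · -- kstar = 1 : all nonempty B's are singletons
      have hkeq : kstar = 1 := by omega
      have hBcard : ∀ z ∈ sfin, (Bz X z).card = 1 := by
        intro z hz
        have h1 : 1 ≤ (Bz X z).card := Finset.card_pos.mpr ((hmem_sfin z).mp hz)
        have h2 := hymax z hz
        omega
      -- the Y-neighbor structure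
      rcases Nat.lt_or_ge sfin.card 3 with hslt | hsge
      · -- sfin.card ∈ {1, 2}
        have hscard : sfin.card = 1 ∨ sfin.card = 2 := by
          have := Finset.card_pos.mpr hsfin_ne
          omega
        -- helper: given z1 ∈ sfin with B z1 = {b1}, its Y-neighbour lives in another
        -- fiber z2 ∈ sfin with B z2 = {b2}
        have hnbr_struct : ∀ z1 ∈ sfin, ∃ z2 ∈ sfin, z2 ≠ z1 ∧ G.Adj z1 z2 := by
          intro z1 hz1
          obtain ⟨b1, hb1⟩ := Finset.card_eq_one.mp (hBcard z1 hz1)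
          have hb1X : (z1, b1) ∉ X := mem_Bz.mp (hb1 ▸ Finset.mem_singleton_self b1)
          obtain ⟨⟨z2, j⟩, hw'X, hadj⟩ := hYnbr (z1, b1) hb1X
          have hz2 : z2 ∈ sfin := (hmem_sfin z2).mpr ⟨j, mem_Bz.mpr hw'X⟩
          have hz2ne : z2 ≠ z1 := by
            intro h
            subst h
            have hj : j ∈ Bz X z2 := mem_Bz.mpr hw'X
            rw [hb1, Finset.mem_singleton] at hj
            subst hj
            exact (strongProd G (SimpleGraph.cycleGraph n)).irrefl hadj
          exact ⟨z2, hz2, hz2ne, G_adj_of_prod_adj hadj (fun h => hz2ne h.symm)⟩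
        rcases hscard with hs1 | hs2
        · -- impossible: single split fiber, its Y-vertex has no Y-neighbor
          exfalso
          obtain ⟨z1, hz1⟩ := hsfin_ne
          obtain ⟨z2, hz2, hz2ne, _⟩ := hnbr_struct z1 hz1
          have : sfin = {z1} := by
            obtain ⟨w, hw⟩ := Finset.card_eq_one.mp hs1
            rw [hw] at hz1 ⊢
            rw [Finset.mem_singleton] at hz1
            rw [hz1]
          rw [this, Finset.mem_singleton] at hz2
          exact hz2ne hz2
        · -- two split fibers, adjacent
          obtain ⟨z2, hz2, hz2ne, hadj12⟩ := hnbr_struct y hy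
          have hsfin_eq : sfin = {y, z2} := by
            refine (Finset.eq_of_subset_of_card_le ?_ ?_).symm
            · intro w hw
              rcases Finset.mem_insert.mp hw with rfl | hw
              · exact hy
              · rw [Finset.mem_singleton.mp hw]
                exact hz2
            · rw [Finset.card_pair (fun h => hz2ne h.symm), hs2]
          -- counting
          set E1 := (G.neighborFinset y).image (fun a => s(y, a)) with hE1
          set E2 := ((G.neighborFinset z2).erase y).image (fun a => s(z2, a)) with hE2
          have hdisjE : Disjoint E1 E2 := by
            rw [Finset.disjoint_left]
            intro e he1 he2
            rw [hE1, Finset.mem_image] at he1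
            rw [hE2, Finset.mem_image] at he2
            obtain ⟨a, ha, rfl⟩ := he1
            obtain ⟨b, hb, hsb⟩ := he2
            rw [Finset.mem_erase] at hb
            rcases Sym2.eq_iff.mp hsb with ⟨h1, _⟩ | ⟨h1, h2⟩
            · exact hz2ne h1
            · exact hb.1 h2
          -- bounds on E1 sum
          have hyz2 : z2 ∈ G.neighborFinset y := by
            rw [SimpleGraph.mem_neighborFinset]
            exact hadj12
          have hsumE1 : 4 + 3 * ((G.neighborFinset y).card - 1)
              ≤ ∑ e ∈ E1, (crossDe G n X e).card := by
            rw [hE1, Finset.sum_image (by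
              intro a ha b hb h
              exact Sym2.congr_right.mp h)]
            rw [← Finset.sum_erase_add _ _ hyz2]
            have hb1 : 4 ≤ (crossDe G n X (s(y, z2))).card :=
              crossDe_four hn G X hadj12 (hC y) (hC z2) hBy ((hmem_sfin z2).mp hz2)
            have hb2 : 3 * ((G.neighborFinset y).erase z2).card
                ≤ ∑ a ∈ (G.neighborFinset y).erase z2, (crossDe G n X (s(y, a))).card := by
              have h := Finset.card_nsmul_le_sum ((G.neighborFinset y).erase z2)
                (fun a => (crossDe G n X (s(y, a))).card) 3
                (by
                  intro a ha
                  rw [Finset.mem_erase, SimpleGraph.mem_neighborFinset] at ha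
                  have haout : a ∉ sfin := by
                    rw [hsfin_eq]
                    intro hmem
                    rcases Finset.mem_insert.mp hmem with rfl | hmem
                    · exact G.irrefl ha.2
                    · exact ha.1 (Finset.mem_singleton.mp hmem)
                  have hBa : Bz X a = ∅ := by
                    rw [← Finset.not_nonempty_iff_eq_empty]
                    intro hne
                    exact haout ((hmem_sfin a).mpr hne)
                  have h3 := crossDe_three hn G X ha.2 hBa
                  have h4 : (Bz X y).card = 1 := hBcard y hy
                  omega)
              rw [smul_eq_mul] at h
              omega
            rw [Finset.card_erase_of_mem hyz2] at hb2
            omega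
          have hsumE2 : 3 * ((G.neighborFinset z2).card - 1)
              ≤ ∑ e ∈ E2, (crossDe G n X e).card := by
            rw [hE2, Finset.sum_image (by
              intro a ha b hb h
              exact Sym2.congr_right.mp h)]
            have h := Finset.card_nsmul_le_sum ((G.neighborFinset z2).erase y)
              (fun a => (crossDe G n X (s(z2, a))).card) 3
              (by
                intro a ha
                rw [Finset.mem_erase, SimpleGraph.mem_neighborFinset] at ha
                have haout : a ∉ sfin := by
                  rw [hsfin_eq]
                  intro hmem
                  rcases Finset.mem_insert.mp hmem with rfl | hmem
                  · exact ha.1 rfl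
                  · exact G.irrefl ((Finset.mem_singleton.mp hmem) ▸ ha.2)
                have hBa : Bz X a = ∅ := by
                  rw [← Finset.not_nonempty_iff_eq_empty]
                  intro hne
                  exact haout ((hmem_sfin a).mpr hne)
                have h3 := crossDe_three hn G X ha.2 hBa
                have h4 : (Bz X z2).card = 1 := hBcard z2 hz2
                omega)
            rw [smul_eq_mul, Finset.card_erase_of_mem (by
              rw [SimpleGraph.mem_neighborFinset]
              exact hadj12.symm)] at h
            omega
          have hsplit := DD_split G X sfin (E1 ∪ E2)
          rw [Finset.sum_union hdisjE] at hsplit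
          have hW := hWlower sfin (le_refl _)
          have hd1 : minDeg G ≤ (G.neighborFinset y).card := by
            rw [← deg_eq_card_neighborFinset]
            exact minDeg_le G y
          have hd2 : minDeg G ≤ (G.neighborFinset z2).card := by
            rw [← deg_eq_card_neighborFinset]
            exact minDeg_le G z2
          have hscard : sfin.card = 2 := hs2
          omega
      · -- sfin.card ≥ 3 : use global double counting
        set Q : Finset (V × V) := (sfin ×ˢ univ).filter (fun q => G.Adj q.1 q.2) with hQ
        have hQcard : sfin.card * minDeg G ≤ Q.card := by
          rw [Finset.card_eq_sum_card_fiberwise (f := fun q : V × V => q.1) (s := Q)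
            (t := sfin) (by
              intro q hq
              rw [hQ, Finset.mem_coe, Finset.mem_filter, Finset.mem_product] at hq
              exact hq.1.1)]
          have h := Finset.card_nsmul_le_sum sfin
            (fun z => (Q.filter (fun q => q.1 = z)).card) (minDeg G)
            (by
              intro z hz
              have hbij : (Q.filter (fun q => q.1 = z)).card = (G.neighborFinset z).card := by
                refine Finset.card_bij' (fun q _ => q.2) (fun a _ => (z, a)) ?_ ?_ ?_ ?_
                · intro q hq
                  rw [Finset.mem_filter, hQ, Finset.mem_filter, Finset.mem_product] at hq
                  rw [SimpleGraph.mem_neighborFinset]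
                  have := hq.1.2
                  rwa [hq.2] at this
                · intro a ha
                  rw [SimpleGraph.mem_neighborFinset] at ha
                  rw [Finset.mem_filter, hQ, Finset.mem_filter, Finset.mem_product]
                  exact ⟨⟨⟨hz, Finset.mem_univ _⟩, ha⟩, rfl⟩
                · intro q hq
                  rw [Finset.mem_filter] at hq
                  symm
                  rw [Prod.ext_iff]
                  exact ⟨hq.2, rfl⟩
                · intro a _
                  rfl
              rw [hbij, ← deg_eq_card_neighborFinset]
              exact minDeg_le G z)
          rw [smul_eq_mul] at h
          omega
        have hQfib : ∀ e ∈ G.edgeFinset,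
            2 * (Q.filter (fun q => s(q.1, q.2) = e)).card ≤ (crossDe G n X e).card := by
          intro e he
          revert he
          induction e using Sym2.ind with
          | _ z z' =>
            intro he
            rw [SimpleGraph.mem_edgeFinset, SimpleGraph.mem_edgeSet] at he
            set Qf := Q.filter (fun q => s(q.1, q.2) = s(z, z')) with hQf
            have hQfsub : Qf ⊆ {(z, z'), (z', z)} := by
              intro q hq
              rw [hQf, Finset.mem_filter] at hq
              rcases Sym2.eq_iff.mp hq.2 with ⟨h1, h2⟩ | ⟨h1, h2⟩
              · rw [Finset.mem_insert]
                left
                rw [Prod.ext_iff]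
                exact ⟨h1, h2⟩
              · rw [Finset.mem_insert, Finset.mem_singleton]
                right
                rw [Prod.ext_iff]
                exact ⟨h1, h2⟩
            rcases Nat.lt_or_ge Qf.card 1 with h0 | h1
            · omega
            -- some orientation present
            obtain ⟨q, hq⟩ := Finset.card_pos.mp h1
            have hqmem := hq
            rw [hQf, Finset.mem_filter, hQ, Finset.mem_filter, Finset.mem_product] at hqmem
            obtain ⟨⟨⟨hq1s, _⟩, hqadj⟩, hqe⟩ := hqmem
            rcases Nat.lt_or_ge Qf.card 2 with hlt2 | hge2
            · -- exactly one: bound 2 ≤ crossDe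
              have hone : Qf.card = 1 := by omega
              -- q.2 ∉ sfin, else both orientations present
              by_cases hq2s : q.2 ∈ sfin
              · -- both orientations in Qf: contradiction with card 1
                exfalso
                have hrev : (q.2, q.1) ∈ Qf := by
                  rw [hQf, Finset.mem_filter, hQ, Finset.mem_filter, Finset.mem_product]
                  refine ⟨⟨⟨hq2s, Finset.mem_univ _⟩, hqadj.symm⟩, ?_⟩
                  rw [← hqe]
                  exact Sym2.eq_swap
                have hqne : (q.2, q.1) ≠ q := by
                  intro h
                  have h1 : q.2 = q.1 := congrArg Prod.fst h
                  exact G.irrefl (h1 ▸ hqadj)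
                have : 2 ≤ Qf.card := by
                  have hsub2 : {(q.2, q.1), q} ⊆ Qf := by
                    intro r hr
                    rcases Finset.mem_insert.mp hr with rfl | hr
                    · exact hrev
                    · rwa [Finset.mem_singleton.mp hr]
                  calc 2 = ({(q.2, q.1), q} : Finset _).card := (Finset.card_pair hqne).symm
                    _ ≤ _ := Finset.card_le_card hsub2
                omega
              · have hBq2 : Bz X q.2 = ∅ := by
                  rw [← Finset.not_nonempty_iff_eq_empty]
                  intro hne
                  exact hq2s ((hmem_sfin q.2).mpr hne)
                have h3 := crossDe_three hn G X hqadj hBq2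
                have h4 : (Bz X q.1).card = 1 := hBcard q.1 hq1s
                have heq : (crossDe G n X (s(q.1, q.2))).card = (crossDe G n X (s(z,z'))).card := by
                  rw [hqe]
                omega
            · -- both orientations: q and its reverse, both ends in sfin
              have hcard2 : Qf.card = 2 := by
                have := Finset.card_le_card hQfsub
                have h2 : ({((z : V), z'), (z', z)} : Finset (V × V)).card ≤ 2 :=
                  Finset.card_insert_le _ _ |>.trans (by simp)
                omega
              -- the reverse of q must be in Qf
              have hqrev : (q.2, q.1) ∈ Qf := by
                have hsub' : Qf = {(z, z'), (z', z)} := by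
                  apply Finset.eq_of_subset_of_card_le hQfsub
                  rw [hcard2]
                  exact Finset.card_insert_le _ _ |>.trans (by simp)
                rw [hsub']
                rw [hsub'] at hq
                rcases Finset.mem_insert.mp hq with h | h
                · rw [Finset.mem_insert, Finset.mem_singleton]
                  right
                  rw [Prod.ext_iff] at h ⊢
                  exact ⟨h.2, h.1⟩
                · rw [Finset.mem_singleton] at h
                  rw [Finset.mem_insert]
                  left
                  rw [Prod.ext_iff] at h ⊢
                  exact ⟨h.2, h.1⟩
              have hq2s : q.2 ∈ sfin := by
                rw [hQf, Finset.mem_filter, hQ, Finset.mem_filter, Finset.mem_product] at hqrev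
                exact hqrev.1.1.1
              have h4 := crossDe_four hn G X hqadj (hC q.1) (hC q.2)
                ((hmem_sfin q.1).mp hq1s) ((hmem_sfin q.2).mp hq2s)
              have heq : (crossDe G n X (s(q.1, q.2))).card = (crossDe G n X (s(z,z'))).card := by
                rw [hqe]
              omega
        have hQsum : Q.card = ∑ e ∈ G.edgeFinset, (Q.filter (fun q => s(q.1, q.2) = e)).card := by
          apply Finset.card_eq_sum_card_fiberwise
          intro q hq
          rw [hQ, Finset.mem_coe, Finset.mem_filter] at hq
          rw [Finset.mem_coe, SimpleGraph.mem_edgeFinset, SimpleGraph.mem_edgeSet]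
          exact hq.2
        have hcross : 2 * Q.card ≤ ∑ e ∈ G.edgeFinset, (crossDe G n X e).card := by
          rw [hQsum, Finset.mul_sum]
          exact Finset.sum_le_sum hQfib
        have hsplit := DD_split G X sfin G.edgeFinset
        have hW := hWlower sfin (le_refl _)
        have hge3 : 3 ≤ sfin.card := hsge
        have hs_delta : 3 * minDeg G ≤ sfin.card * minDeg G := by
          apply Nat.mul_le_mul_right
          exact hge3
        omega
    · -- kstar ≥ 2
      set E0 := (G.neighborFinset y).image (fun a => s(y, a)) with hE0
      set nbrS := (G.neighborFinset y).filter (fun z => z ∈ sfin) with hnbrS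
      set nbrO := (G.neighborFinset y).filter (fun z => ¬ z ∈ sfin) with hnbrO
      have hsplit_nbr : nbrS.card + nbrO.card = (G.neighborFinset y).card :=
        Finset.card_filter_add_card_filter_not _
      have hsumE0 : 4 * nbrS.card + 3 * kstar * nbrO.card
          ≤ ∑ e ∈ E0, (crossDe G n X e).card := by
        rw [hE0, Finset.sum_image (by
          intro a ha b hb h
          exact Sym2.congr_right.mp h)]
        rw [← Finset.sum_filter_add_sum_filter_not (G.neighborFinset y) (fun z => z ∈ sfin)
          (fun a => (crossDe G n X (s(y, a))).card), ← hnbrS, ← hnbrO]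
        have hS : 4 * nbrS.card ≤ ∑ a ∈ nbrS, (crossDe G n X (s(y, a))).card := by
          have h := Finset.card_nsmul_le_sum nbrS (fun a => (crossDe G n X (s(y, a))).card) 4
            (by
              intro a ha
              rw [hnbrS, Finset.mem_filter, SimpleGraph.mem_neighborFinset] at ha
              exact crossDe_four hn G X ha.1 (hC y) (hC a) hBy ((hmem_sfin a).mp ha.2))
          rw [smul_eq_mul] at h
          omega
        have hO : 3 * kstar * nbrO.card ≤ ∑ a ∈ nbrO, (crossDe G n X (s(y, a))).card := by
          have h := Finset.card_nsmul_le_sum nbrO (fun a => (crossDe G n X (s(y, a))).card)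
            (3 * kstar)
            (by
              intro a ha
              rw [hnbrO, Finset.mem_filter, SimpleGraph.mem_neighborFinset] at ha
              have hBa : Bz X a = ∅ := by
                rw [← Finset.not_nonempty_iff_eq_empty]
                intro hne
                exact ha.2 ((hmem_sfin a).mpr hne)
              have h3 := crossDe_three hn G X ha.1 hBa
              omega)
          rw [smul_eq_mul] at h
          calc 3 * kstar * nbrO.card = nbrO.card * (3 * kstar) := by ring
            _ ≤ _ := h
        omega
      have hsfin_card : 1 + nbrS.card ≤ sfin.card := by
        have hsub : insert y nbrS ⊆ sfin := by
          intro w hw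
          rcases Finset.mem_insert.mp hw with rfl | hw
          · exact hy
          · rw [hnbrS, Finset.mem_filter] at hw
            exact hw.2
        have hnotin : y ∉ nbrS := by
          rw [hnbrS, Finset.mem_filter, SimpleGraph.mem_neighborFinset]
          intro h
          exact G.irrefl h.1
        calc 1 + nbrS.card = (insert y nbrS).card := by
              rw [Finset.card_insert_of_notMem hnotin]
              omega
          _ ≤ sfin.card := Finset.card_le_card hsub
      have hsplit := DD_split G X sfin E0
      have hW := hWlower sfin (le_refl _)
      have hd : minDeg G ≤ (G.neighborFinset y).card := by
        rw [← deg_eq_card_neighborFinset]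
        exact minDeg_le G y
      -- arithmetic: DD ≥ 2(1 + t) + 4t + 3k*(d - t) ≥ 6d + 2
      have harith : 6 * minDeg G + 2 ≤ 2 * sfin.card + (4 * nbrS.card + 3 * kstar * nbrO.card) := by
        nlinarith [hsplit_nbr, hsfin_card, hd, hkge]
      omega

end CaseII
section Assembly

open Finset SimpleGraph

variable {V : Type*} [Fintype V] {n : ℕ} [NeZero n]

lemma Xz_compl (X : Set (V × Fin n)) (z : V) : Xz Xᶜ z = Bz X z := by
  ext i
  simp [Xz, Bz]

lemma main_lower (hn : 3 ≤ n) (G : SimpleGraph V) [Nonempty V]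
    (h : 6 * minDeg G + 2 ≤
      min (3 * n * edgeConn G) (2 * (Fintype.card V + 2 * numEdges G)))
    {S : Set (Sym2 (V × Fin n))}
    (hcut : IsRestrictedEdgeCut (strongProd G (SimpleGraph.cycleGraph n)) S) :
    6 * minDeg G + 2 ≤ S.ncard := by
  classical
  set P := strongProd G (SimpleGraph.cycleGraph n) with hP
  obtain ⟨hSsub, hnconn, hcomp⟩ := hcut
  have hne : Nonempty (V × Fin n) := inferInstance
  have hnpre : ¬ (P.deleteEdges S).Preconnected := by
    intro hpre
    exact hnconn ((SimpleGraph.connected_iff _).mpr ⟨hpre, hne⟩)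
  rw [SimpleGraph.Preconnected] at hnpre
  push_neg at hnpre
  obtain ⟨a, b, hab⟩ := hnpre
  set X : Set (V × Fin n) := {w | (P.deleteEdges S).Reachable a w} with hX
  have haX : a ∈ X := by
    rw [hX, Set.mem_setOf_eq]
  have hbX : b ∉ X := hab
  have hsame : ∀ w w', (P.deleteEdges S).Adj w w' → (w ∈ X ↔ w' ∈ X) := by
    intro w w' hadj
    rw [hX, Set.mem_setOf_eq, Set.mem_setOf_eq]
    exact ⟨fun hr => hr.trans hadj.reachable, fun hr => hr.trans hadj.symm.reachable⟩
  have hXiff : ∀ p q, P.Adj p q → s(p,q) ∉ S → (p ∈ X ↔ q ∈ X) := by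
    intro p q hadj hns
    exact hsame p q (SimpleGraph.deleteEdges_adj.mpr ⟨hadj, hns⟩)
  have hnbr : ∀ w : V × Fin n, ∃ w', w' ≠ w ∧ (P.deleteEdges S).Adj w w' := by
    intro w
    have h2 := hcomp w
    have : ∃ w'' ∈ ((P.deleteEdges S).connectedComponentMk w).supp, w'' ≠ w := by
      by_contra hcon
      push_neg at hcon
      have hsub : ((P.deleteEdges S).connectedComponentMk w).supp ⊆ {w} := by
        intro x hx
        exact hcon x hx
      have := Set.ncard_le_ncard hsub (Set.toFinite _)
      rw [Set.ncard_singleton] at this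
      omega
    obtain ⟨w'', hw''s, hw''ne⟩ := this
    rw [SimpleGraph.ConnectedComponent.mem_supp_iff] at hw''s
    have hreach : (P.deleteEdges S).Reachable w w'' :=
      (SimpleGraph.ConnectedComponent.exact hw''s).symm
    obtain ⟨wk⟩ := hreach
    cases wk with
    | nil => exact absurd rfl hw''ne
    | cons hadj _ => exact ⟨_, hadj.ne', hadj⟩
  have hXnbr : ∀ w : V × Fin n, w ∈ X → ∃ w', w' ∈ X ∧ P.Adj w w' := by
    intro w hw
    obtain ⟨w', _, hadj⟩ := hnbr w
    exact ⟨w', (hsame w w' hadj).mp hw, (SimpleGraph.deleteEdges_adj.mp hadj).1⟩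
  have hYnbr : ∀ w : V × Fin n, w ∉ X → ∃ w', w' ∉ X ∧ P.Adj w w' := by
    intro w hw
    obtain ⟨w', _, hadj⟩ := hnbr w
    refine ⟨w', fun hw' => hw ((hsame w w' hadj).mpr hw'), (SimpleGraph.deleteEdges_adj.mp hadj).1⟩
  have hDle : (DD G n X).card ≤ S.ncard := card_DD_le_ncard G X hXiff
  by_cases hCase : (∃ z, Bz X z = ∅) ∧ (∃ z, Xz X z = ∅)
  · have h1 := caseI hn G X hCase.1 hCase.2
    have h2 : 6 * minDeg G + 2 ≤ 3 * n * edgeConn G := le_trans h (min_le_left _ _)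
    omega
  · rw [not_and_or] at hCase
    have hδ : 6 * minDeg G + 2 ≤ 2 * (Fintype.card V + 2 * numEdges G) :=
      le_trans h (min_le_right _ _)
    rcases hCase with hA | hC
    · -- no fiber fully inside X : apply case II to Xᶜ
      push_neg at hA
      have h1 := caseII hn G Xᶜ
        (fun z => Finset.nonempty_iff_ne_empty.mpr (by rw [Xz_compl]; exact (hA z).ne_empty))
        ⟨a, by simpa using haX⟩
        (by
          intro w hw
          have hwX : w ∈ X := by simpa using hw
          obtain ⟨w', hw', hadj⟩ := hXnbr w hwX
          exact ⟨w', by simpa using hw', hadj⟩)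
        hδ
      rw [DD_compl_card] at h1
      omega
    · -- no fiber fully outside X : apply case II to X
      push_neg at hC
      have h1 := caseII hn G X
        (fun z => Finset.nonempty_iff_ne_empty.mpr (hC z).ne_empty)
        ⟨b, hbX⟩ hYnbr hδ
      omega

end Assembly

theorem maximallyRestricted_strongProd_cycleGraph {V : Type*} [Fintype V]
    (G : SimpleGraph V) (m n : ℕ) (hm : Fintype.card V = m) (hnt : 2 ≤ m)
    (hG : G.Connected) (hn : 3 ≤ n)
    (h : 6 * minDeg G + 2 ≤ min (3 * n * edgeConn G) (2 * (m + 2 * numEdges G))) :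
    restEdgeConn (strongProd G (SimpleGraph.cycleGraph n)) =
      minEdgeDeg (strongProd G (SimpleGraph.cycleGraph n)) := by
  haveI : NeZero n := ⟨by omega⟩
  haveI : Nonempty V := Fintype.card_pos_iff.mp (by omega)
  subst hm
  obtain ⟨S0, hcut0, hcard0⟩ := restCut_exists G hn hG hnt
  have hub : restEdgeConn (strongProd G (SimpleGraph.cycleGraph n)) ≤ 6 * minDeg G + 2 :=
    Nat.sInf_le ⟨S0, hcut0, hcard0⟩
  have hlb : 6 * minDeg G + 2 ≤ restEdgeConn (strongProd G (SimpleGraph.cycleGraph n)) := by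
    refine le_csInf ⟨_, ⟨S0, hcut0, hcard0⟩⟩ ?_
    rintro k ⟨S, hcut, rfl⟩
    exact main_lower hn G h hcut
  rw [minEdgeDeg_strongProd G hn]
  omega
end
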